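/- arXiv:math/0003159 — 4 statements merged into one kernel-verified Lean document; each statement's English description precedes it below -/
import Mathlib

section
/- Let n ≥ 1, i ≥ 0 and m > 0. The subspace of V^{⊗(i+mn)} ⊗ (V*)^{⊗i} consisting of the vectors w with g·w = det(g)^m · w for all g ∈ GL(n,ℂ) equals the sum, over all permutations σ of the i+mn tensor factors of V, of the images Φ_σ((V^{⊗i}⊗(V*)^{⊗i})^{GL(n,ℂ)}). -/
open scoped BigOperators

noncomputable section

namespace TensorCov

abbrev TSp (n k l : ℕ) : Type := ((Fin k → Fin n) × (Fin l → Fin n)) → ℂ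

def tact {n : ℕ} (k l : ℕ) (g : (Matrix (Fin n) (Fin n) ℂ)ˣ) (xx : TSp n k l) :
    TSp n k l :=
  fun ab => ∑ p : (Fin k → Fin n) × (Fin l → Fin n),
    ((∏ t, (g : Matrix (Fin n) (Fin n) ℂ) (ab.1 t) (p.1 t)) *
      (∏ t, (((g⁻¹ : (Matrix (Fin n) (Fin n) ℂ)ˣ) : Matrix (Fin n) (Fin n) ℂ)) (p.2 t) (ab.2 t)))
    * xx p

/-- The coordinates of `o = ∑_{τ ∈ Sₙ} sgn(τ) e_{τ(1)} ⊗ ⋯ ⊗ e_{τ(n)} ∈ V^{⊗n}`. -/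
def oVec (n : ℕ) : (Fin n → Fin n) → ℂ :=
  fun a => if h : Function.Bijective a then
    ((Equiv.Perm.sign (Equiv.ofBijective a h) : ℤ) : ℂ) else 0

/-- The arrangement `Fin (m·n) ⊕ Fin i ≃ Fin (i + m·n)` used to place the `m`
copies of `o` in front of the remaining `i` tensor factors. -/
def arr (i m n : ℕ) : (Fin (m * n) ⊕ Fin i) ≃ Fin (i + m * n) :=
  finSumFinEquiv.trans (finCongr (Nat.add_comm (m * n) i))

/-- `Φ_σ : (V^{⊗i} ⊗ (V*)^{⊗i})^{GL(n,ℂ)} → V^{⊗(i+mn)} ⊗ (V*)^{⊗i}`,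
`Φ_σ(t ⊗ s) = (σ·(o^{⊗m} ⊗ t)) ⊗ s`, written in coordinates (and defined on the
whole space). -/
def PhiSigma (n i m : ℕ) (σ : Equiv.Perm (Fin (i + m * n))) (x : TSp n i i) :
    TSp n (i + m * n) i :=
  fun ab =>
    (∏ t : Fin m,
        oVec n (fun q => ab.1 (σ (arr i m n (Sum.inl (finProdFinEquiv (t, q))))))) *
      x (fun h => ab.1 (σ (arr i m n (Sum.inr h))), ab.2)

end TensorCov

end

noncomputable section
namespace TensorCov
namespace AuxFFT
open Matrix TensorCov

abbrev Ix (n k : ℕ) := Fin k → Fin n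

variable {n : ℕ}

/-- `k`-th tensor power of a matrix, in coordinates. -/
def G (n k : ℕ) (X : Matrix (Fin n) (Fin n) ℂ) : Matrix (Ix n k) (Ix n k) ℂ :=
  Matrix.of fun a b => ∏ t, X (a t) (b t)

lemma G_apply {k : ℕ} (X : Matrix (Fin n) (Fin n) ℂ) (a b : Ix n k) :
    G n k X a b = ∏ t, X (a t) (b t) := rfl

lemma G_mul (k : ℕ) (X Y : Matrix (Fin n) (Fin n) ℂ) :
    G n k X * G n k Y = G n k (X * Y) := by
  ext a b
  simp only [Matrix.mul_apply, G_apply]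
  rw [Fintype.prod_sum fun t j => X (a t) j * Y j (b t)]
  exact Finset.sum_congr rfl fun c _ => (Finset.prod_mul_distrib).symm

lemma G_one (k : ℕ) : G n k (1 : Matrix (Fin n) (Fin n) ℂ) = 1 := by
  ext a b
  simp only [G_apply, Matrix.one_apply]
  by_cases h : a = b
  · subst h; simp
  · rw [if_neg h]
    obtain ⟨t, ht⟩ := Function.ne_iff.mp h
    exact Finset.prod_eq_zero (Finset.mem_univ t) (if_neg ht)


/-- permutation operator on `V^{⊗k}` in coordinates -/
def P (n k : ℕ) (π : Equiv.Perm (Fin k)) : Matrix (Ix n k) (Ix n k) ℂ :=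
  Matrix.of fun a b => if b = a ∘ π then 1 else 0

lemma P_apply {k : ℕ} (π : Equiv.Perm (Fin k)) (a b : Ix n k) :
    P n k π a b = if b = a ∘ π then 1 else 0 := rfl

lemma P_mul_apply {k : ℕ} (π : Equiv.Perm (Fin k)) (M : Matrix (Ix n k) (Ix n k) ℂ)
    (a : Ix n k) (b : Ix n k) : (P n k π * M) a b = M (a ∘ π) b := by
  simp [Matrix.mul_apply, P_apply]

lemma mul_P_apply {k : ℕ} (M : Matrix (Ix n k) (Ix n k) ℂ) (π : Equiv.Perm (Fin k))
    (a : Ix n k) (b : Ix n k) : (M * P n k π) a b = M a (b ∘ ⇑π⁻¹) := by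
  simp only [Matrix.mul_apply, P_apply]
  rw [Finset.sum_eq_single (b ∘ ⇑π⁻¹)]
  · have hb : b = (b ∘ ⇑π⁻¹) ∘ ⇑π := by ext t; simp [Function.comp]
    rw [if_pos hb, mul_one]
  · intro c _ hc
    rw [if_neg, mul_zero]
    intro h
    apply hc
    ext t; rw [h]; simp [Function.comp]
  · intro h; exact absurd (Finset.mem_univ _) h

lemma P_one (k : ℕ) : P n k 1 = 1 := by
  ext a b
  simp only [P_apply, Matrix.one_apply]
  have : (a ∘ ⇑(1 : Equiv.Perm (Fin k))) = a := rfl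
  rw [this]
  by_cases h : b = a
  · simp [h]
  · rw [if_neg h, if_neg (fun hh => h hh.symm)]

lemma P_mul (k : ℕ) (π ρ : Equiv.Perm (Fin k)) :
    P n k π * P n k ρ = P n k (π * ρ) := by
  ext a b
  rw [P_mul_apply]
  simp only [P_apply]
  congr 1

/-- sum over functions vanishing off bijections = sum over permutations -/
lemma sum_perm_of_vanish {k : ℕ} (A : (Fin k → Fin k) → ℂ)
    (h0 : ∀ f, ¬ Function.Bijective f → A f = 0) :
    ∑ f : Fin k → Fin k, A f = ∑ π : Equiv.Perm (Fin k), A ⇑π := by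
  classical
  rw [← Finset.sum_filter_of_ne
    (p := fun f => Function.Bijective f)
    (fun f _ hf => by by_contra h; exact hf (h0 f h))]
  exact Finset.sum_bij'
    (fun f hf => Equiv.ofBijective f (Finset.mem_filter.mp hf).2)
    (fun π _ => ⇑π)
    (fun _ _ => Finset.mem_univ _)
    (fun π _ => Finset.mem_filter.mpr ⟨Finset.mem_univ _, π.bijective⟩)
    (fun f hf => rfl)
    (fun π _ => by ext x; rfl)
    (fun f hf => rfl)

lemma sum_mul_oVec (F : (Fin n → Fin n) → ℂ) :
    ∑ c : Fin n → Fin n, F c * oVec n c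
      = ∑ τ : Equiv.Perm (Fin n), F ⇑τ * ((Equiv.Perm.sign τ : ℤ) : ℂ) := by
  rw [sum_perm_of_vanish (fun c => F c * oVec n c)
    (fun f hf => by simp only [oVec, dif_neg hf, mul_zero])]
  refine Finset.sum_congr rfl fun τ _ => ?_
  congr 1
  simp only [oVec, dif_pos τ.bijective]
  have : Equiv.ofBijective ⇑τ τ.bijective = τ := Equiv.ext fun x => rfl
  rw [this]

lemma oVec_contract (X : Matrix (Fin n) (Fin n) ℂ) (A : Fin n → Fin n) :
    ∑ c : Fin n → Fin n, (∏ q, X (A q) (c q)) * oVec n c = X.det * oVec n A := by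
  rw [sum_mul_oVec]
  have hdet : ∀ M : Matrix (Fin n) (Fin n) ℂ,
      ∑ τ : Equiv.Perm (Fin n), (∏ q, M (A q) (τ q)) * ((Equiv.Perm.sign τ : ℤ) : ℂ)
        = (M.submatrix A id).det := by
    intro M
    rw [← Matrix.det_transpose, Matrix.det_apply]
    refine Finset.sum_congr rfl fun τ _ => ?_
    rw [mul_comm]
    simp [Matrix.transpose_apply, Matrix.submatrix_apply, Units.smul_def, zsmul_eq_mul]
  rw [hdet]
  by_cases h : Function.Bijective A
  · simp only [oVec, dif_pos h]
    have : X.submatrix A id = X.submatrix (Equiv.ofBijective A h) id := rfl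
    rw [this, Matrix.det_permute]
    ring
  · simp only [oVec, dif_neg h, mul_zero]
    have hinj : ¬ Function.Injective A := fun hi => h (Finite.injective_iff_bijective.mp hi)
    rw [Function.not_injective_iff] at hinj
    obtain ⟨i, j, hij, hne⟩ := hinj
    refine Matrix.det_zero_of_row_eq hne ?_
    ext t
    simp [Matrix.submatrix_apply, hij]

lemma oVec_contract' (X : Matrix (Fin n) (Fin n) ℂ) (B : Fin n → Fin n) :
    ∑ c : Fin n → Fin n, (∏ q, X (c q) (B q)) * oVec n c = X.det * oVec n B := by
  have := oVec_contract Xᵀ B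
  rw [Matrix.det_transpose] at this
  simpa [Matrix.transpose_apply] using this

lemma sum_oVec_sq : ∑ c : Fin n → Fin n, oVec n c * oVec n c = (n.factorial : ℂ) := by
  rw [sum_mul_oVec]
  have h1 : ∀ τ : Equiv.Perm (Fin n), oVec n ⇑τ = ((Equiv.Perm.sign τ : ℤ) : ℂ) := by
    intro τ
    simp only [oVec, dif_pos τ.bijective]
    have : Equiv.ofBijective ⇑τ τ.bijective = τ := Equiv.ext fun x => rfl
    rw [this]
  rw [Finset.sum_congr rfl fun τ _ => by
    rw [h1 τ, ← Int.cast_mul, ← Units.val_mul, Int.units_mul_self, Units.val_one,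
      Int.cast_one]]
  simp [Finset.card_univ, Fintype.card_perm]

/-- pure tensor basis elements of `End(V)^{⊗k}` -/
def D (n k : ℕ) (φ : Fin k → Fin n × Fin n) : Matrix (Ix n k) (Ix n k) ℂ :=
  Matrix.of fun a b => if ∀ t, (a t, b t) = φ t then 1 else 0

lemma prod_ite_eq_ite_forall {α : Type*} [Fintype α] (p : α → Prop) [DecidablePred p] :
    (∏ t, if p t then (1 : ℂ) else 0) = if ∀ t, p t then 1 else 0 := by
  by_cases h : ∀ t, p t
  · rw [if_pos h]; simp [h]
  · rw [if_neg h]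
    push_neg at h
    obtain ⟨t, ht⟩ := h
    exact Finset.prod_eq_zero (Finset.mem_univ t) (if_neg ht)

lemma matrix_eq_sum_D {k : ℕ} (M : Matrix (Ix n k) (Ix n k) ℂ) :
    M = ∑ φ : Fin k → Fin n × Fin n,
      M (fun t => (φ t).1) (fun t => (φ t).2) • D n k φ := by
  ext a b
  rw [Matrix.sum_apply]
  rw [Finset.sum_eq_single (fun t => (a t, b t))]
  · simp [D]
  · intro φ _ hφ
    have : ¬ ∀ t, (a t, b t) = φ t := by
      intro hh; exact hφ (funext fun t => (hh t).symm)
    simp [D, Matrix.smul_apply, this]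
  · intro h; exact absurd (Finset.mem_univ _) h

lemma sum_sign_subset (k : ℕ) (f : Fin k → Fin k) :
    ∑ S : Finset (Fin k), (-1 : ℂ) ^ (k - S.card) * (if ∀ t, f t ∈ S then 1 else 0)
      = if Function.Surjective f then 1 else 0 := by
  classical
  have hprod := Fintype.prod_add (fun _ : Fin k => (1 : ℂ))
    (fun x => if ∃ t, f t = x then 0 else -1)
  have hL : (∏ x : Fin k, ((1 : ℂ) + if ∃ t, f t = x then 0 else -1))
      = if Function.Surjective f then 1 else 0 := by
    by_cases h : Function.Surjective f
    · rw [if_pos h]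
      refine Finset.prod_eq_one fun x _ => ?_
      rw [if_pos (h x), add_zero]
    · rw [if_neg h]
      rw [Function.Surjective] at h
      push_neg at h
      obtain ⟨x, hx⟩ := h
      refine Finset.prod_eq_zero (Finset.mem_univ x) ?_
      rw [if_neg (by simpa using hx)]
      ring
  rw [hL] at hprod
  rw [hprod]
  refine Finset.sum_congr rfl fun S _ => ?_
  rw [Finset.prod_const_one, one_mul]
  by_cases h : ∀ t, f t ∈ S
  · rw [if_pos h, mul_one]
    have h2 : ∀ x ∈ Sᶜ, (if ∃ t, f t = x then (0:ℂ) else -1) = -1 := by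
      intro x hx
      rw [if_neg]
      rintro ⟨t, rfl⟩
      exact (Finset.mem_compl.mp hx) (h t)
    rw [Finset.prod_congr rfl h2, Finset.prod_const, Finset.card_compl]
    simp
  · rw [if_neg h, mul_zero]
    push_neg at h
    obtain ⟨t, ht⟩ := h
    refine (Finset.prod_eq_zero (i := f t) (Finset.mem_compl.mpr ht) ?_).symm
    exact if_pos ⟨t, rfl⟩

lemma symmetrized_mem {k : ℕ} (φ : Fin k → Fin n × Fin n) :
    (∑ π : Equiv.Perm (Fin k), D n k (φ ∘ π)) ∈
      Submodule.span ℂ (Set.range (G n k)) := by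
  classical
  have key : (∑ π : Equiv.Perm (Fin k), D n k (φ ∘ π)) =
      ∑ S : Finset (Fin k), ((-1 : ℂ) ^ (k - S.card)) •
        G n k (Matrix.of fun c d => ∑ t ∈ S, if φ t = (c, d) then (1:ℂ) else 0) := by
    ext a b
    rw [Matrix.sum_apply, Matrix.sum_apply]
    have step1 : ∀ S : Finset (Fin k),
        (((-1 : ℂ) ^ (k - S.card)) •
          G n k (Matrix.of fun c d => ∑ t ∈ S, if φ t = (c, d) then (1:ℂ) else 0)) a b
        = ∑ f : Fin k → Fin k,
            ((-1 : ℂ) ^ (k - S.card)) * ((if ∀ t, f t ∈ S then (1:ℂ) else 0) *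
              ∏ t, if φ (f t) = (a t, b t) then (1:ℂ) else 0) := by
      intro S
      rw [Matrix.smul_apply, G_apply, smul_eq_mul, ← Finset.mul_sum]
      congr 1
      rw [show (∏ t, (Matrix.of fun c d => ∑ t' ∈ S, if φ t' = (c, d) then (1:ℂ) else 0) (a t) (b t))
          = ∏ t, ∑ t' ∈ S, if φ t' = (a t, b t) then (1:ℂ) else 0 from rfl]
      rw [Finset.prod_univ_sum]
      rw [← Finset.sum_subset (Finset.subset_univ (Fintype.piFinset fun _ => S))]
      · refine Finset.sum_congr rfl fun f hf => ?_
        rw [if_pos (fun t => (Fintype.mem_piFinset.mp hf) t), one_mul]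
      · intro f _ hf
        rw [if_neg (fun hh => hf (Fintype.mem_piFinset.mpr hh)), zero_mul]
    rw [Finset.sum_congr rfl fun S _ => step1 S]
    rw [Finset.sum_comm]
    have step2 : ∀ f : Fin k → Fin k,
        (∑ S : Finset (Fin k), ((-1 : ℂ) ^ (k - S.card)) *
          ((if ∀ t, f t ∈ S then (1:ℂ) else 0) *
            ∏ t, if φ (f t) = (a t, b t) then (1:ℂ) else 0))
        = (if Function.Surjective f then (1:ℂ) else 0) *
            ∏ t, if φ (f t) = (a t, b t) then (1:ℂ) else 0 := by
      intro f
      rw [← sum_sign_subset k f, Finset.sum_mul]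
      refine Finset.sum_congr rfl fun S _ => by ring
    rw [Finset.sum_congr rfl fun f _ => step2 f]
    rw [sum_perm_of_vanish (fun f => _)
      (fun f hf => by
        rw [if_neg (fun hs => hf (Finite.surjective_iff_bijective.mp hs)), zero_mul])]
    refine Finset.sum_congr rfl fun π _ => ?_
    rw [if_pos π.surjective, one_mul]
    rw [prod_ite_eq_ite_forall (fun t => φ (π t) = (a t, b t))]
    rw [show D n k (φ ∘ ⇑π) a b = if ∀ t, (a t, b t) = φ (π t) then (1:ℂ) else 0 from rfl]
    by_cases h : ∀ t, φ (π t) = (a t, b t)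
    · rw [if_pos h, if_pos (fun t => (h t).symm)]
    · rw [if_neg h, if_neg (fun hh => h (fun t => (hh t).symm))]
  rw [key]
  exact Submodule.sum_mem _ fun S _ =>
    Submodule.smul_mem _ _ (Submodule.subset_span ⟨_, rfl⟩)

lemma invariant_mem_span_G {k : ℕ} (T : Matrix (Ix n k) (Ix n k) ℂ)
    (hT : ∀ (π : Equiv.Perm (Fin k)) (a b : Ix n k), T (a ∘ π) (b ∘ π) = T a b) :
    T ∈ Submodule.span ℂ (Set.range (G n k)) := by
  classical
  have hfac : (k.factorial : ℂ) ≠ 0 := Nat.cast_ne_zero.mpr k.factorial_ne_zero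
  have key : (k.factorial : ℂ) • T =
      ∑ φ : Fin k → Fin n × Fin n,
        T (fun t => (φ t).1) (fun t => (φ t).2) •
          ∑ π : Equiv.Perm (Fin k), D n k (φ ∘ π) := by
    have swap : ∀ π : Equiv.Perm (Fin k),
        (∑ φ : Fin k → Fin n × Fin n,
          T (fun t => (φ t).1) (fun t => (φ t).2) • D n k (φ ∘ π)) = T := by
      intro π
      refine (Fintype.sum_equiv (Equiv.arrowCongr π.symm (Equiv.refl (Fin n × Fin n)))
        _ (fun ψ => T (fun t => (ψ t).1) (fun t => (ψ t).2) • D n k ψ) ?_).trans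
        (matrix_eq_sum_D T).symm
      intro φ
      have he : (Equiv.arrowCongr π.symm (Equiv.refl (Fin n × Fin n))) φ = φ ∘ ⇑π := rfl
      rw [he]
      congr 1
      exact (hT π (fun t => (φ t).1) (fun t => (φ t).2)).symm
    calc (k.factorial : ℂ) • T
        = ∑ _π : Equiv.Perm (Fin k), T := by
          rw [Finset.sum_const, Finset.card_univ, Fintype.card_perm, Fintype.card_fin]
          simp [← Nat.cast_smul_eq_nsmul ℂ]
      _ = ∑ π : Equiv.Perm (Fin k), ∑ φ : Fin k → Fin n × Fin n,
            T (fun t => (φ t).1) (fun t => (φ t).2) • D n k (φ ∘ π) := by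
          exact Finset.sum_congr rfl fun π _ => (swap π).symm
      _ = _ := by
          rw [Finset.sum_comm]
          exact Finset.sum_congr rfl fun φ _ => (Finset.smul_sum).symm
  have : T = ((k.factorial : ℂ)⁻¹) • ((k.factorial : ℂ) • T) := by
    rw [smul_smul, inv_mul_cancel₀ hfac, one_smul]
  rw [this, key]
  exact Submodule.smul_mem _ _ (Submodule.sum_mem _ fun φ _ =>
    Submodule.smul_mem _ _ (symmetrized_mem φ))

lemma scalar_eq_smul_one (z : ℂ) :
    Matrix.scalar (Fin n) z = z • (1 : Matrix (Fin n) (Fin n) ℂ) := by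
  ext u v
  by_cases h : u = v
  · subst h; simp [Matrix.scalar_apply, Matrix.one_apply]
  · simp [Matrix.scalar_apply, Matrix.one_apply, h, Matrix.diagonal_apply_ne _ h]

lemma isUnit_finite_complement (X : Matrix (Fin n) (Fin n) ℂ) :
    {z : ℂ | ¬ IsUnit (X + z • (1 : Matrix (Fin n) (Fin n) ℂ))}.Finite := by
  have hsub : {z : ℂ | ¬ IsUnit (X + z • (1 : Matrix (Fin n) (Fin n) ℂ))} ⊆
      {z : ℂ | ((-X).charpoly).IsRoot z} := by
    intro z hz
    simp only [Set.mem_setOf_eq] at hz ⊢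
    have hev : ((-X).charpoly).eval z = (X + z • (1 : Matrix (Fin n) (Fin n) ℂ)).det := by
      rw [Matrix.charpoly, eval_det, Matrix.matPolyEquiv_charmatrix]
      congr 1
      rw [Polynomial.eval_sub, Polynomial.eval_X, Polynomial.eval_C]
      rw [scalar_eq_smul_one]
      abel
    rw [Polynomial.IsRoot, hev]
    by_contra hdet
    exact hz ((Matrix.isUnit_iff_isUnit_det _).mpr (Ne.isUnit hdet))
  exact Set.Finite.subset (Polynomial.finite_setOf_isRoot (-X).charpoly_monic.ne_zero) hsub

lemma commute_G_all {k : ℕ} (M : Matrix (Ix n k) (Ix n k) ℂ)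
    (h : ∀ g : (Matrix (Fin n) (Fin n) ℂ)ˣ, G n k (↑g) * M = M * G n k (↑g))
    (X : Matrix (Fin n) (Fin n) ℂ) : G n k X * M = M * G n k X := by
  classical
  ext a b
  set p : Polynomial ℂ :=
    (∑ c : Ix n k, (∏ t, (Polynomial.C (X (a t) (c t)) +
        if a t = c t then Polynomial.X else 0)) * Polynomial.C (M c b))
    - (∑ c : Ix n k, Polynomial.C (M a c) *
        ∏ t, (Polynomial.C (X (c t) (b t)) +
          if c t = b t then Polynomial.X else 0)) with hp
  have hentry : ∀ (z : ℂ) (u v : Fin n),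
      (X + z • (1 : Matrix (Fin n) (Fin n) ℂ)) u v
        = X u v + if u = v then z else 0 := by
    intro z u v
    by_cases h' : u = v <;>
      simp [Matrix.add_apply, Matrix.smul_apply, Matrix.one_apply, h', smul_eq_mul]
  have heval : ∀ z : ℂ, p.eval z =
      (G n k (X + z • 1) * M) a b - (M * G n k (X + z • 1)) a b := by
    intro z
    rw [hp]
    rw [Polynomial.eval_sub, Polynomial.eval_finset_sum, Polynomial.eval_finset_sum]
    simp only [Matrix.mul_apply, G_apply]
    congr 1
    · refine Finset.sum_congr rfl fun c _ => ?_
      rw [Polynomial.eval_mul, Polynomial.eval_C, Polynomial.eval_prod]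
      congr 1
      refine Finset.prod_congr rfl fun t _ => ?_
      rw [hentry, Polynomial.eval_add, Polynomial.eval_C, apply_ite (Polynomial.eval z),
        Polynomial.eval_X, Polynomial.eval_zero]
    · refine Finset.sum_congr rfl fun c _ => ?_
      rw [Polynomial.eval_mul, Polynomial.eval_C, Polynomial.eval_prod]
      congr 1
      refine Finset.prod_congr rfl fun t _ => ?_
      rw [hentry, Polynomial.eval_add, Polynomial.eval_C, apply_ite (Polynomial.eval z),
        Polynomial.eval_X, Polynomial.eval_zero]
  have hroots : {z : ℂ | IsUnit (X + z • (1 : Matrix (Fin n) (Fin n) ℂ))} ⊆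
      {z : ℂ | p.IsRoot z} := by
    intro z hz
    simp only [Set.mem_setOf_eq] at hz ⊢
    have hcomm := h hz.unit
    rw [hz.unit_spec] at hcomm
    rw [Polynomial.IsRoot, heval z, hcomm, sub_self]
  have hinf : {z : ℂ | p.IsRoot z}.Infinite := by
    refine Set.Infinite.mono hroots ?_
    have := (isUnit_finite_complement (n := n) X).infinite_compl
    convert this using 1
    ext z
    simp [Set.mem_compl_iff]
  have hp0 : p = 0 := Polynomial.eq_zero_of_infinite_isRoot p hinf
  have h0 := heval 0
  rw [hp0] at h0
  simp only [Polynomial.eval_zero, zero_smul, add_zero] at h0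
  exact sub_eq_zero.mp h0.symm

section DC

variable {k : ℕ}

/-- the matrix whose `d`-column is `u` and all other columns vanish -/
def colL (d : Ix n k) : ((Ix n k → ℂ)) →ₗ[ℂ] Matrix (Ix n k) (Ix n k) ℂ where
  toFun u := Matrix.of fun r s => if s = d then u r else 0
  map_add' u v := by ext r s; by_cases h : s = d <;> simp [h]
  map_smul' z u := by ext r s; by_cases h : s = d <;> simp [h]

/-- extract the `c`-column -/
def colP (c : Ix n k) : Matrix (Ix n k) (Ix n k) ℂ →ₗ[ℂ] (Ix n k → ℂ) where
  toFun Y := fun r => Y r c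
  map_add' u v := rfl
  map_smul' z u := rfl

lemma sum_colL (T : Matrix (Ix n k) (Ix n k) ℂ) :
    ∑ d : Ix n k, colL (n := n) d (fun r => T r d) = T := by
  ext r s
  rw [Matrix.sum_apply]
  rw [Finset.sum_eq_single s]
  · simp [colL]
  · intro d _ hd
    simp [colL, Ne.symm hd]
  · intro hs; exact absurd (Finset.mem_univ _) hs

lemma mul_colL (A : Matrix (Ix n k) (Ix n k) ℂ) (d : Ix n k) (u : Ix n k → ℂ) :
    A * colL (n := n) d u = colL d (A.mulVec u) := by
  ext r s
  by_cases h : s = d <;>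
    simp [colL, Matrix.mul_apply, Matrix.mulVec, dotProduct, h,
      Finset.sum_ite_eq, mul_ite]

lemma colP_mul (A Y : Matrix (Ix n k) (Ix n k) ℂ) (c : Ix n k) :
    colP (n := n) c (A * Y) = A.mulVec (colP c Y) := by
  ext r
  simp [colP, Matrix.mul_apply, Matrix.mulVec, dotProduct]
  rfl

theorem mem_span_P (M : Matrix (Ix n k) (Ix n k) ℂ)
    (h : ∀ g : (Matrix (Fin n) (Fin n) ℂ)ˣ, G n k (↑g) * M = M * G n k (↑g)) :
    M ∈ Submodule.span ℂ (Set.range (P n k)) := by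
  classical
  have hall := commute_G_all M h
  -- M commutes with everything commuting with all permutation operators
  have hMT : ∀ T : Matrix (Ix n k) (Ix n k) ℂ,
      (∀ π, P n k π * T = T * P n k π) → M * T = T * M := by
    intro T hT
    have hinv : ∀ (π : Equiv.Perm (Fin k)) (a b : Ix n k),
        T (a ∘ ⇑π) (b ∘ ⇑π) = T a b := by
      intro π a b
      have h1 : (P n k π * T) a (b ∘ ⇑π) = T (a ∘ ⇑π) (b ∘ ⇑π) := P_mul_apply π T a _
      rw [hT π, mul_P_apply] at h1
      have h2 : (b ∘ ⇑π) ∘ ⇑π⁻¹ = b := by ext t; simp [Function.comp]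
      rw [h2] at h1
      exact h1.symm
    have hTspan := invariant_mem_span_G T hinv
    refine Submodule.span_induction (p := fun x _ => M * x = x * M) ?_ ?_ ?_ ?_ hTspan
    · rintro x ⟨X, rfl⟩
      exact (hall X).symm
    · simp
    · intro x y _ _ hx hy
      rw [mul_add, add_mul, hx, hy]
    · intro z x _ hx
      rw [mul_smul_comm, smul_mul_assoc, hx]
  set B := Submodule.span ℂ (Set.range (P n k)) with hB
  have hBmul : ∀ (π : Equiv.Perm (Fin k)) (T : Matrix (Ix n k) (Ix n k) ℂ),
      T ∈ B → P n k π * T ∈ B := by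
    intro π T hT
    refine Submodule.span_induction (p := fun x _ => P n k π * x ∈ B) ?_ ?_ ?_ ?_ hT
    · rintro x ⟨ρ, rfl⟩
      rw [P_mul]
      exact Submodule.subset_span ⟨π * ρ, rfl⟩
    · show P n k π * 0 ∈ B
      rw [mul_zero]; exact Submodule.zero_mem _
    · intro x y _ _ hx hy
      rw [mul_add]; exact Submodule.add_mem _ hx hy
    · intro z x _ hx
      rw [mul_smul_comm]; exact Submodule.smul_mem _ _ hx
  obtain ⟨B', hcompl⟩ := Submodule.exists_isCompl B
  set p₀ : Matrix (Ix n k) (Ix n k) ℂ →ₗ[ℂ] Matrix (Ix n k) (Ix n k) ℂ :=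
    B.subtype ∘ₗ (B.linearProjOfIsCompl B' hcompl) with hp₀
  have hp₀mem : ∀ T, p₀ T ∈ B := fun T => (B.linearProjOfIsCompl B' hcompl T).2
  have hp₀id : ∀ T ∈ B, p₀ T = T := by
    intro T hT
    have : B.linearProjOfIsCompl B' hcompl T = ⟨T, hT⟩ :=
      Submodule.linearProjOfIsCompl_apply_left hcompl ⟨T, hT⟩
    rw [hp₀, LinearMap.comp_apply, this]
    rfl
  set pr : Matrix (Ix n k) (Ix n k) ℂ →ₗ[ℂ] Matrix (Ix n k) (Ix n k) ℂ :=
    (k.factorial : ℂ)⁻¹ • (∑ π : Equiv.Perm (Fin k),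
      (LinearMap.mulLeft ℂ (P n k π)) ∘ₗ p₀ ∘ₗ (LinearMap.mulLeft ℂ (P n k π⁻¹))) with hpr
  have hprapp : ∀ T, pr T = (k.factorial : ℂ)⁻¹ •
      ∑ π : Equiv.Perm (Fin k), P n k π * p₀ (P n k π⁻¹ * T) := by
    intro T
    rw [hpr]
    simp [LinearMap.sum_apply, LinearMap.mulLeft_apply]
  have hfac : (k.factorial : ℂ) ≠ 0 := Nat.cast_ne_zero.mpr k.factorial_ne_zero
  have hprmem : ∀ T, pr T ∈ B := by
    intro T
    rw [hprapp]
    exact Submodule.smul_mem _ _ (Submodule.sum_mem _ fun π _ =>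
      hBmul π _ (hp₀mem _))
  have hprid : ∀ T ∈ B, pr T = T := by
    intro T hT
    rw [hprapp]
    have : ∀ π : Equiv.Perm (Fin k), P n k π * p₀ (P n k π⁻¹ * T) = T := by
      intro π
      rw [hp₀id _ (hBmul π⁻¹ T hT), ← mul_assoc, P_mul, mul_inv_cancel, P_one, one_mul]
    rw [Finset.sum_congr rfl fun π _ => this π, Finset.sum_const, Finset.card_univ,
      Fintype.card_perm, Fintype.card_fin, ← Nat.cast_smul_eq_nsmul ℂ, smul_smul,
      inv_mul_cancel₀ hfac, one_smul]
  -- pr is equivariant for left multiplication by permutation operators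
  have hprP : ∀ (σ : Equiv.Perm (Fin k)) (T : Matrix (Ix n k) (Ix n k) ℂ),
      pr (P n k σ * T) = P n k σ * pr T := by
    intro σ T
    rw [hprapp, hprapp, mul_smul_comm, Finset.mul_sum]
    congr 1
    refine Fintype.sum_equiv (Equiv.mulLeft σ⁻¹) _ _ ?_
    intro π
    have he : (Equiv.mulLeft σ⁻¹) π = σ⁻¹ * π := rfl
    rw [he]
    have h1 : P n k σ * P n k (σ⁻¹ * π) = P n k π := by
      rw [P_mul]; congr 1; group
    have h2 : P n k (σ⁻¹ * π)⁻¹ * T = P n k π⁻¹ * (P n k σ * T) := by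
      rw [← mul_assoc, P_mul, _root_.mul_inv_rev, inv_inv]
    rw [← h1, mul_assoc, h2]
  -- pr commutes with left multiplication by M
  have hprM : ∀ T, pr (M * T) = M * pr T := by
    have hphi : ∀ c d : Ix n k, ∀ u : Ix n k → ℂ,
        colP (n := n) c (pr (colL d (M.mulVec u)))
          = M.mulVec (colP c (pr (colL d u))) := by
      intro c d
      set φ : (Ix n k → ℂ) →ₗ[ℂ] (Ix n k → ℂ) :=
        (colP c) ∘ₗ pr ∘ₗ (colL d) with hφ
      have hφapp : ∀ u, φ u = colP (n := n) c (pr (colL d u)) := fun u => rfl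
      have hφP : ∀ (π : Equiv.Perm (Fin k)) (u : Ix n k → ℂ),
          φ ((P n k π).mulVec u) = (P n k π).mulVec (φ u) := by
        intro π u
        rw [hφapp, hφapp, ← mul_colL, hprP, colP_mul]
      set Tm := LinearMap.toMatrix' φ with hTm
      have happ : ∀ u, φ u = Tm.mulVec u := by
        intro u
        rw [hTm, ← Matrix.toLin'_apply, Matrix.toLin'_toMatrix']
      have hcommP : ∀ π : Equiv.Perm (Fin k), P n k π * Tm = Tm * P n k π := by
        intro π
        have h1 : φ ∘ₗ Matrix.toLin' (P n k π) = Matrix.toLin' (P n k π) ∘ₗ φ := by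
          refine LinearMap.ext fun u => ?_
          simp only [LinearMap.comp_apply, Matrix.toLin'_apply]
          exact hφP π u
        have h2 := congrArg LinearMap.toMatrix' h1
        rw [LinearMap.toMatrix'_comp, LinearMap.toMatrix'_comp,
          LinearMap.toMatrix'_toLin', ← hTm] at h2
        exact h2.symm
      have hcommM := hMT Tm hcommP
      intro u
      rw [← hφapp, ← hφapp, happ, happ, Matrix.mulVec_mulVec, Matrix.mulVec_mulVec,
        hcommM]
    intro T
    have e1 : pr (M * T) = ∑ d, pr (colL (n := n) d (M.mulVec (fun r' => T r' d))) := by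
      conv_lhs => rw [← sum_colL T]
      rw [Finset.mul_sum, map_sum]
      exact Finset.sum_congr rfl fun d _ => by rw [mul_colL]
    have e2 : pr T = ∑ d, pr (colL (n := n) d (fun r' => T r' d)) := by
      conv_lhs => rw [← sum_colL T]
      rw [map_sum]
    ext r c
    have hL : pr (M * T) r c
        = ∑ d, colP (n := n) c (pr (colL d (M.mulVec (fun r' => T r' d)))) r := by
      rw [e1, Matrix.sum_apply]
      rfl
    rw [hL, Finset.sum_congr rfl fun d _ => congrFun (hphi c d (fun r' => T r' d)) r]
    have hsv : (fun r' => ∑ d, colP (n := n) c (pr (colL d (fun r'' => T r'' d))) r')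
        = colP c (pr T) := by
      ext r'
      rw [e2]
      simp only [colP, Matrix.sum_apply, LinearMap.coe_mk, AddHom.coe_mk]
      show ∑ d, pr (colL d fun r'' => T r'' d) r' c = (∑ d, pr (colL d fun r' => T r' d)) r' c
      rw [Matrix.sum_apply]
    calc ∑ d, M.mulVec (colP (n := n) c (pr (colL d (fun r' => T r' d)))) r
        = M.mulVec (fun r' => ∑ d, colP (n := n) c (pr (colL d (fun r'' => T r'' d))) r') r := by
          simp only [Matrix.mulVec, dotProduct, Finset.mul_sum]
          rw [Finset.sum_comm]
      _ = M.mulVec (colP c (pr T)) r := by rw [hsv]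
      _ = (M * pr T) r c := by rw [← colP_mul]; rfl
  have hone : (1 : Matrix (Ix n k) (Ix n k) ℂ) ∈ B := by
    have : P n k 1 = 1 := P_one k
    exact this ▸ Submodule.subset_span ⟨1, rfl⟩
  have : M = pr M := by
    conv_lhs => rw [← mul_one M]
    rw [← hprid 1 hone, ← hprM 1, mul_one]
  rw [this]
  exact hprmem M

end DC

/-! ### matrices of mixed tensors -/

def mat {k l : ℕ} (Y : TSp n k l) : Matrix (Ix n k) (Ix n l) ℂ :=
  Matrix.of fun a b => Y (a, b)

lemma sandwich {k l : ℕ} (A B : Matrix (Fin n) (Fin n) ℂ) (Y : TSp n k l)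
    (a : Ix n k) (b : Ix n l) :
    (G n k A * mat Y * G n l B) a b
      = ∑ p : Ix n k × Ix n l,
          ((∏ t, A (a t) (p.1 t)) * (∏ t, B (p.2 t) (b t))) * Y p := by
  rw [Fintype.sum_prod_type]
  simp only [Matrix.mul_apply, Finset.sum_mul]
  rw [Finset.sum_comm]
  refine Finset.sum_congr rfl fun p1 _ => Finset.sum_congr rfl fun p2 _ => ?_
  show G n k A a p1 * mat Y p1 p2 * G n l B p2 b
      = (∏ t, A (a t) (p1 t)) * (∏ t, B (p2 t) (b t)) * Y (p1, p2)
  rw [G_apply, G_apply]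
  show _ * Y (p1, p2) * _ = _
  ring

lemma tact_mat {k l : ℕ} (g : (Matrix (Fin n) (Fin n) ℂ)ˣ) (Y : TSp n k l) :
    mat (tact k l g Y)
      = G n k (↑g) * mat Y * G n l (↑(g⁻¹)) := by
  ext a b
  rw [sandwich]
  rfl

lemma G_unit_mul_inv {k : ℕ} (g : (Matrix (Fin n) (Fin n) ℂ)ˣ) :
    G n k (↑g) * G n k (↑(g⁻¹)) = 1 := by
  rw [G_mul, ← Units.val_mul, mul_inv_cancel, Units.val_one, G_one]

lemma G_unit_inv_mul {k : ℕ} (g : (Matrix (Fin n) (Fin n) ℂ)ˣ) :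
    G n k (↑(g⁻¹)) * G n k (↑g) = 1 := by
  rw [G_mul, ← Units.val_mul, inv_mul_cancel, Units.val_one, G_one]

/-! ### index plumbing for `Φ_σ` -/

section Plumbing

variable {i m : ℕ}

def inlIdx (i m n : ℕ) (σ : Equiv.Perm (Fin (i + m * n))) (t : Fin m) (q : Fin n) :
    Fin (i + m * n) := σ (arr i m n (Sum.inl (finProdFinEquiv (t, q))))

def inrIdx (i m n : ℕ) (σ : Equiv.Perm (Fin (i + m * n))) (c : Fin i) :
    Fin (i + m * n) := σ (arr i m n (Sum.inr c))

def preEquiv (i m n : ℕ) (σ : Equiv.Perm (Fin (i + m * n))) :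
    ((Fin m × Fin n) ⊕ Fin i) ≃ Fin (i + m * n) :=
  (Equiv.sumCongr finProdFinEquiv (Equiv.refl (Fin i))).trans
    ((arr i m n).trans σ)

def splitEquiv (σ : Equiv.Perm (Fin (i + m * n))) :
    Ix n (i + m * n) ≃ ((Fin m → Fin n → Fin n) × Ix n i) :=
  ((Equiv.arrowCongr (preEquiv i m n σ).symm (Equiv.refl (Fin n))).trans
    ((Equiv.sumArrowEquivProdArrow _ _ _).trans
      (Equiv.prodCongr (Equiv.curry _ _ _) (Equiv.refl _))))

lemma splitEquiv_fst (σ : Equiv.Perm (Fin (i + m * n))) (a : Ix n (i + m * n))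
    (t : Fin m) (q : Fin n) :
    ((splitEquiv (n := n) σ) a).1 t q = a (inlIdx i m n σ t q) := rfl

lemma splitEquiv_snd (σ : Equiv.Perm (Fin (i + m * n))) (a : Ix n (i + m * n))
    (c : Fin i) :
    ((splitEquiv (n := n) σ) a).2 c = a (inrIdx i m n σ c) := rfl

lemma split_symm_inl (σ : Equiv.Perm (Fin (i + m * n)))
    (v : Fin m → Fin n → Fin n) (d : Ix n i) (t : Fin m) (q : Fin n) :
    (splitEquiv (n := n) σ).symm (v, d) (inlIdx i m n σ t q) = v t q := by
  have h := splitEquiv_fst σ ((splitEquiv (n := n) σ).symm (v, d)) t q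
  rw [Equiv.apply_symm_apply] at h
  exact h.symm

lemma split_symm_inr (σ : Equiv.Perm (Fin (i + m * n)))
    (v : Fin m → Fin n → Fin n) (d : Ix n i) (c : Fin i) :
    (splitEquiv (n := n) σ).symm (v, d) (inrIdx i m n σ c) = d c := by
  have h := splitEquiv_snd σ ((splitEquiv (n := n) σ).symm (v, d)) c
  rw [Equiv.apply_symm_apply] at h
  exact h.symm

lemma prod_split (σ : Equiv.Perm (Fin (i + m * n))) (f : Fin (i + m * n) → ℂ) :
    ∏ j, f j = (∏ t : Fin m, ∏ q : Fin n, f (inlIdx i m n σ t q)) *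
      ∏ c : Fin i, f (inrIdx i m n σ c) := by
  rw [← Equiv.prod_comp (preEquiv i m n σ) f]
  rw [Fintype.prod_sum_type]
  congr 1
  rw [Fintype.prod_prod_type]
  rfl

lemma PhiSigma_apply (σ : Equiv.Perm (Fin (i + m * n))) (x : TSp n i i)
    (a : Ix n (i + m * n)) (b : Ix n i) :
    PhiSigma n i m σ x (a, b)
      = (∏ t : Fin m, oVec n (fun q => a (inlIdx i m n σ t q))) *
          x (fun c => a (inrIdx i m n σ c), b) := rfl

/-! ### forward inclusion: `Φ_σ` of an invariant is a `det^m` eigenvector -/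

lemma tact_PhiSigma (σ : Equiv.Perm (Fin (i + m * n))) (x : TSp n i i)
    (hx : ∀ g : (Matrix (Fin n) (Fin n) ℂ)ˣ, tact i i g x = x)
    (g : (Matrix (Fin n) (Fin n) ℂ)ˣ) :
    tact (i + m * n) i g (PhiSigma n i m σ x)
      = (((g : Matrix (Fin n) (Fin n) ℂ).det) ^ m) • PhiSigma n i m σ x := by
  funext ab
  obtain ⟨a, b⟩ := ab
  show (∑ p : Ix n (i + m * n) × Ix n i,
      ((∏ t, (g : Matrix (Fin n) (Fin n) ℂ) (a t) (p.1 t)) *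
        (∏ t, ((↑(g⁻¹) : Matrix (Fin n) (Fin n) ℂ)) (p.2 t) (b t)))
      * PhiSigma n i m σ x p) = _
  rw [Fintype.sum_prod_type]
  rw [← Equiv.sum_comp (splitEquiv (n := n) σ).symm
    (fun p1 => ∑ p2 : Ix n i, _)]
  rw [Fintype.sum_prod_type]
  set gm := (g : Matrix (Fin n) (Fin n) ℂ) with hgm
  set gi := ((↑(g⁻¹)) : Matrix (Fin n) (Fin n) ℂ) with hgi
  have hterm : ∀ (v : Fin m → Fin n → Fin n) (d : Ix n i) (p2 : Ix n i),
      ((∏ t, gm (a t) ((splitEquiv (n := n) σ).symm (v, d) t)) *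
        (∏ t, gi (p2 t) (b t)))
        * PhiSigma n i m σ x ((splitEquiv (n := n) σ).symm (v, d), p2)
      = (∏ t : Fin m, (∏ q, gm (a (inlIdx i m n σ t q)) (v t q)) * oVec n (v t)) *
        (((∏ c, gm (a (inrIdx i m n σ c)) (d c)) * (∏ t, gi (p2 t) (b t)))
          * x (d, p2)) := by
    intro v d p2
    rw [PhiSigma_apply]
    have h1 : ∀ t : Fin m, (fun q => (splitEquiv (n := n) σ).symm (v, d)
        (inlIdx i m n σ t q)) = v t := by
      intro t; funext q; exact split_symm_inl σ v d t q
    have h2 : (fun c => (splitEquiv (n := n) σ).symm (v, d) (inrIdx i m n σ c)) = d := by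
      funext c; exact split_symm_inr σ v d c
    rw [Finset.prod_congr rfl (fun t _ => congrArg (oVec n) (h1 t)), h2]
    rw [prod_split σ (fun j => gm (a j) ((splitEquiv (n := n) σ).symm (v, d) j))]
    have h3 : ∀ (t : Fin m) (q : Fin n),
        (splitEquiv (n := n) σ).symm (v, d) (inlIdx i m n σ t q) = v t q :=
      split_symm_inl σ v d
    have h4 : ∀ c : Fin i,
        (splitEquiv (n := n) σ).symm (v, d) (inrIdx i m n σ c) = d c :=
      split_symm_inr σ v d
    rw [Finset.prod_congr rfl fun t _ => Finset.prod_congr rfl fun q _ =>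
      congrArg (gm (a (inlIdx i m n σ t q))) (h3 t q)]
    rw [Finset.prod_congr rfl fun c _ => congrArg (gm (a (inrIdx i m n σ c))) (h4 c)]
    rw [Finset.prod_mul_distrib]
    ring
  rw [Finset.sum_congr rfl fun v _ => Finset.sum_congr rfl fun d _ =>
    Finset.sum_congr rfl fun p2 _ => hterm v d p2]
  -- pull out the v-factor
  have hsum : ∀ v : Fin m → Fin n → Fin n,
      (∑ d : Ix n i, ∑ p2 : Ix n i,
        (∏ t : Fin m, (∏ q, gm (a (inlIdx i m n σ t q)) (v t q)) * oVec n (v t)) *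
        (((∏ c, gm (a (inrIdx i m n σ c)) (d c)) * (∏ t, gi (p2 t) (b t)))
          * x (d, p2)))
      = (∏ t : Fin m, (∏ q, gm (a (inlIdx i m n σ t q)) (v t q)) * oVec n (v t)) *
        (∑ d : Ix n i, ∑ p2 : Ix n i,
          (((∏ c, gm (a (inrIdx i m n σ c)) (d c)) * (∏ t, gi (p2 t) (b t)))
            * x (d, p2))) := by
    intro v
    rw [Finset.mul_sum]
    exact Finset.sum_congr rfl fun d _ => by rw [Finset.mul_sum]
  rw [Finset.sum_congr rfl fun v _ => hsum v, ← Finset.sum_mul]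
  -- the v-sum gives det^m times the oVec product
  have hv : (∑ v : Fin m → Fin n → Fin n,
      ∏ t : Fin m, (∏ q, gm (a (inlIdx i m n σ t q)) (v t q)) * oVec n (v t))
      = (gm.det) ^ m * ∏ t : Fin m, oVec n (fun q => a (inlIdx i m n σ t q)) := by
    rw [← Fintype.prod_sum fun t c' => (∏ q, gm (a (inlIdx i m n σ t q)) (c' q)) * oVec n c']
    rw [Finset.prod_congr rfl fun t _ => oVec_contract gm (fun q => a (inlIdx i m n σ t q))]
    rw [Finset.prod_mul_distrib, Finset.prod_const, Finset.card_univ, Fintype.card_fin]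
  -- the (d, p2)-sum is `tact i i g x` evaluated, hence `x`
  have hd : (∑ d : Ix n i, ∑ p2 : Ix n i,
      (((∏ c, gm (a (inrIdx i m n σ c)) (d c)) * (∏ t, gi (p2 t) (b t)))
        * x (d, p2)))
      = x (fun c => a (inrIdx i m n σ c), b) := by
    have := congrFun (hx g) (fun c => a (inrIdx i m n σ c), b)
    rw [← this]
    show _ = ∑ p : Ix n i × Ix n i, _
    rw [Fintype.sum_prod_type]
  rw [hv, hd]
  show _ = gm.det ^ m * PhiSigma n i m σ x (a, b)
  rw [PhiSigma_apply]
  ring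

end Plumbing

section Reverse

variable {i m : ℕ}

/-- `w ⊗ (ε)^{⊗m}`: augment `w` with `m` copies of the dual of `o` -/
def Wt (i m : ℕ) (w : TSp n (i + m * n) i) : TSp n (i + m * n) (i + m * n) :=
  fun ab => (∏ t : Fin m, oVec n (fun q => ab.2 (inlIdx i m n 1 t q))) *
    w (ab.1, fun c => ab.2 (inrIdx i m n 1 c))

lemma tact_Wt (w : TSp n (i + m * n) i)
    (hw : ∀ g : (Matrix (Fin n) (Fin n) ℂ)ˣ,
      tact (i + m * n) i g w = (((g : Matrix (Fin n) (Fin n) ℂ).det) ^ m) • w)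
    (g : (Matrix (Fin n) (Fin n) ℂ)ˣ) :
    tact (i + m * n) (i + m * n) g (Wt i m w) = Wt i m w := by
  funext ab
  obtain ⟨a, b⟩ := ab
  set gm := (g : Matrix (Fin n) (Fin n) ℂ) with hgm
  set gi := ((↑(g⁻¹)) : Matrix (Fin n) (Fin n) ℂ) with hgi
  show (∑ p : Ix n (i + m * n) × Ix n (i + m * n),
      ((∏ t, gm (a t) (p.1 t)) * (∏ t, gi (p.2 t) (b t))) * Wt i m w p) = _
  rw [Fintype.sum_prod_type]
  rw [Finset.sum_comm]
  rw [← Equiv.sum_comp (splitEquiv (n := n) (1 : Equiv.Perm (Fin (i + m * n)))).symm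
    (fun p2 => ∑ p1 : Ix n (i + m * n), _)]
  rw [Fintype.sum_prod_type]
  have hterm : ∀ (v : Fin m → Fin n → Fin n) (d : Ix n i) (p1 : Ix n (i + m * n)),
      ((∏ t, gm (a t) (p1 t)) *
        (∏ t, gi ((splitEquiv (n := n) (1 : Equiv.Perm (Fin (i + m * n)))).symm (v, d) t) (b t)))
        * Wt i m w (p1, (splitEquiv (n := n) (1 : Equiv.Perm (Fin (i + m * n)))).symm (v, d))
      = (∏ t : Fin m, (∏ q, gi (v t q) (b (inlIdx i m n 1 t q))) * oVec n (v t)) *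
        (((∏ j, gm (a j) (p1 j)) * (∏ c, gi (d c) (b (inrIdx i m n 1 c))))
          * w (p1, d)) := by
    intro v d p1
    show _ * ((∏ t : Fin m, oVec n (fun q =>
        (splitEquiv (n := n) (1 : Equiv.Perm (Fin (i + m * n)))).symm (v, d) (inlIdx i m n 1 t q))) *
      w (p1, fun c => (splitEquiv (n := n) (1 : Equiv.Perm (Fin (i + m * n)))).symm (v, d) (inrIdx i m n 1 c))) = _
    have h1 : ∀ t : Fin m, (fun q => (splitEquiv (n := n) (1 : Equiv.Perm (Fin (i + m * n)))).symm (v, d)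
        (inlIdx i m n 1 t q)) = v t := by
      intro t; funext q; exact split_symm_inl _ v d t q
    have h2 : (fun c => (splitEquiv (n := n) (1 : Equiv.Perm (Fin (i + m * n)))).symm (v, d)
        (inrIdx i m n 1 c)) = d := by
      funext c; exact split_symm_inr _ v d c
    rw [Finset.prod_congr rfl (fun t _ => congrArg (oVec n) (h1 t)), h2]
    rw [prod_split (1 : Equiv.Perm (Fin (i + m * n)))
      (fun j => gi ((splitEquiv (n := n) (1 : Equiv.Perm (Fin (i + m * n)))).symm (v, d) j) (b j))]
    rw [Finset.prod_congr rfl fun t _ => Finset.prod_congr rfl fun q _ =>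
      congrArg (fun z => gi z (b (inlIdx i m n 1 t q))) (split_symm_inl _ v d t q)]
    rw [Finset.prod_congr rfl fun c _ =>
      congrArg (fun z => gi z (b (inrIdx i m n 1 c))) (split_symm_inr _ v d c)]
    rw [Finset.prod_mul_distrib]
    ring
  rw [Finset.sum_congr rfl fun v _ => Finset.sum_congr rfl fun d _ =>
    Finset.sum_congr rfl fun p1 _ => hterm v d p1]
  have hsum : ∀ v : Fin m → Fin n → Fin n,
      (∑ d : Ix n i, ∑ p1 : Ix n (i + m * n),
        (∏ t : Fin m, (∏ q, gi (v t q) (b (inlIdx i m n 1 t q))) * oVec n (v t)) *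
        (((∏ j, gm (a j) (p1 j)) * (∏ c, gi (d c) (b (inrIdx i m n 1 c))))
          * w (p1, d)))
      = (∏ t : Fin m, (∏ q, gi (v t q) (b (inlIdx i m n 1 t q))) * oVec n (v t)) *
        (∑ d : Ix n i, ∑ p1 : Ix n (i + m * n),
          (((∏ j, gm (a j) (p1 j)) * (∏ c, gi (d c) (b (inrIdx i m n 1 c))))
            * w (p1, d))) := by
    intro v
    rw [Finset.mul_sum]
    exact Finset.sum_congr rfl fun d _ => by rw [Finset.mul_sum]
  rw [Finset.sum_congr rfl fun v _ => hsum v, ← Finset.sum_mul]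
  have hv : (∑ v : Fin m → Fin n → Fin n,
      ∏ t : Fin m, (∏ q, gi (v t q) (b (inlIdx i m n 1 t q))) * oVec n (v t))
      = (gi.det) ^ m * ∏ t : Fin m, oVec n (fun q => b (inlIdx i m n 1 t q)) := by
    rw [← Fintype.prod_sum fun t c' => (∏ q, gi (c' q) (b (inlIdx i m n 1 t q))) * oVec n c']
    rw [Finset.prod_congr rfl fun t _ => oVec_contract' gi (fun q => b (inlIdx i m n 1 t q))]
    rw [Finset.prod_mul_distrib, Finset.prod_const, Finset.card_univ, Fintype.card_fin]
  have hd : (∑ d : Ix n i, ∑ p1 : Ix n (i + m * n),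
      (((∏ j, gm (a j) (p1 j)) * (∏ c, gi (d c) (b (inrIdx i m n 1 c))))
        * w (p1, d)))
      = (gm.det) ^ m * w (a, fun c => b (inrIdx i m n 1 c)) := by
    have h5 := congrFun (hw g) (a, fun c => b (inrIdx i m n 1 c))
    have h6 : tact (i + m * n) i g w (a, fun c => b (inrIdx i m n 1 c))
        = ∑ d : Ix n i, ∑ p1 : Ix n (i + m * n),
          (((∏ j, gm (a j) (p1 j)) * (∏ c, gi (d c) (b (inrIdx i m n 1 c))))
            * w (p1, d)) := by
      show (∑ p : Ix n (i + m * n) × Ix n i, _) = _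
      rw [Fintype.sum_prod_type]
      rw [Finset.sum_comm]
    rw [← h6, h5]
    rfl
  rw [hv, hd]
  have hdetmul : (gi.det) ^ m * ((gm.det) ^ m) = 1 := by
    rw [← mul_pow, ← Matrix.det_mul, hgi, hgm, ← Units.val_mul, inv_mul_cancel,
      Units.val_one, Matrix.det_one, one_pow]
  show _ = (∏ t : Fin m, oVec n (fun q => b (inlIdx i m n 1 t q))) *
      w (a, fun c => b (inrIdx i m n 1 c))
  calc (gi.det ^ m * ∏ t : Fin m, oVec n fun q => b (inlIdx i m n 1 t q)) *
        (gm.det ^ m * w (a, fun c => b (inrIdx i m n 1 c)))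
      = (gi.det ^ m * gm.det ^ m) *
        ((∏ t : Fin m, oVec n fun q => b (inlIdx i m n 1 t q)) *
          w (a, fun c => b (inrIdx i m n 1 c))) := by ring
    _ = _ := by rw [hdetmul, one_mul]

end Reverse

section Recovery

variable {i m : ℕ}

/-- recovery: contract the `m·n` dual slots with `o^{⊗m}` -/
def Rfun (i m : ℕ) (Y : Matrix (Ix n (i + m * n)) (Ix n (i + m * n)) ℂ) :
    TSp n (i + m * n) i :=
  fun ae => ((n.factorial : ℂ)⁻¹) ^ m *
    ∑ v : Fin m → Fin n → Fin n, (∏ t, oVec n (v t)) *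
      Y ae.1 ((splitEquiv (n := n) (1 : Equiv.Perm (Fin (i + m * n)))).symm (v, ae.2))

lemma Rfun_zero : Rfun (n := n) i m 0 = 0 := by
  funext ae
  simp [Rfun]

lemma Rfun_add (Y Z : Matrix (Ix n (i + m * n)) (Ix n (i + m * n)) ℂ) :
    Rfun i m (Y + Z) = Rfun i m Y + Rfun i m Z := by
  funext ae
  show _ = Rfun i m Y ae + Rfun i m Z ae
  rw [Rfun, Rfun, Rfun, ← mul_add, ← Finset.sum_add_distrib]
  congr 1
  refine Finset.sum_congr rfl fun v _ => ?_
  rw [Matrix.add_apply, mul_add]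

lemma Rfun_smul (z : ℂ) (Y : Matrix (Ix n (i + m * n)) (Ix n (i + m * n)) ℂ) :
    Rfun i m (z • Y) = z • Rfun i m Y := by
  funext ae
  show _ = z * Rfun i m Y ae
  rw [Rfun, Rfun]
  rw [Finset.sum_congr rfl fun v _ => by
    rw [Matrix.smul_apply, smul_eq_mul]]
  rw [show (∑ v : Fin m → Fin n → Fin n, (∏ t, oVec n (v t)) *
      (z * Y ae.1 ((splitEquiv (n := n) (1 : Equiv.Perm (Fin (i + m * n)))).symm (v, ae.2))))
    = z * ∑ v : Fin m → Fin n → Fin n, (∏ t, oVec n (v t)) *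
      Y ae.1 ((splitEquiv (n := n) (1 : Equiv.Perm (Fin (i + m * n)))).symm (v, ae.2)) by
      rw [Finset.mul_sum]; exact Finset.sum_congr rfl fun v _ => by ring]
  ring

lemma Rfun_Wt (w : TSp n (i + m * n) i) : Rfun i m (mat (Wt i m w)) = w := by
  funext ae
  obtain ⟨a, e⟩ := ae
  rw [Rfun]
  have hterm : ∀ v : Fin m → Fin n → Fin n,
      (∏ t, oVec n (v t)) * mat (Wt i m w) a
        ((splitEquiv (n := n) (1 : Equiv.Perm (Fin (i + m * n)))).symm (v, e))
      = (∏ t : Fin m, oVec n (v t) * oVec n (v t)) * w (a, e) := by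
    intro v
    show (∏ t, oVec n (v t)) * Wt i m w (a,
      (splitEquiv (n := n) (1 : Equiv.Perm (Fin (i + m * n)))).symm (v, e)) = _
    rw [Wt]
    have h1 : ∀ t : Fin m, (fun q => (splitEquiv (n := n) (1 : Equiv.Perm (Fin (i + m * n)))).symm (v, e)
        (inlIdx i m n 1 t q)) = v t := by
      intro t; funext q; exact split_symm_inl _ v e t q
    have h2 : (fun c => (splitEquiv (n := n) (1 : Equiv.Perm (Fin (i + m * n)))).symm (v, e)
        (inrIdx i m n 1 c)) = e := by
      funext c; exact split_symm_inr _ v e c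
    rw [Finset.prod_congr rfl (fun t _ => congrArg (oVec n) (h1 t)), h2,
      Finset.prod_mul_distrib]
    ring
  rw [Finset.sum_congr rfl fun v _ => hterm v, ← Finset.sum_mul]
  rw [← Fintype.prod_sum fun (_ : Fin m) (c' : Fin n → Fin n) => oVec n c' * oVec n c']
  rw [Finset.prod_congr rfl fun t _ => sum_oVec_sq (n := n)]
  rw [Finset.prod_const, Finset.card_univ, Fintype.card_fin]
  rw [← mul_assoc, ← mul_pow, inv_mul_cancel₀
    (Nat.cast_ne_zero.mpr n.factorial_ne_zero), one_pow, one_mul]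

/-- the `GL`-invariant identity contraction in `V^{⊗i} ⊗ (V^*)^{⊗i}` -/
def xdelta (n i : ℕ) : TSp n i i := fun p => if p.1 = p.2 then 1 else 0

lemma mat_xdelta : mat (xdelta n i) = (1 : Matrix (Ix n i) (Ix n i) ℂ) := by
  ext a b
  show (if a = b then (1:ℂ) else 0) = _
  rw [Matrix.one_apply]

lemma xdelta_invariant (g : (Matrix (Fin n) (Fin n) ℂ)ˣ) :
    tact i i g (xdelta n i) = xdelta n i := by
  have h1 := tact_mat (n := n) g (xdelta n i)
  rw [mat_xdelta, mul_one, G_unit_mul_inv] at h1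
  funext p
  obtain ⟨a, b⟩ := p
  have h2 : mat (tact i i g (xdelta n i)) a b = (1 : Matrix (Ix n i) (Ix n i) ℂ) a b := by
    rw [h1]
  show tact i i g (xdelta n i) (a, b) = xdelta n i (a, b)
  calc tact i i g (xdelta n i) (a, b) = mat (tact i i g (xdelta n i)) a b := rfl
    _ = (1 : Matrix (Ix n i) (Ix n i) ℂ) a b := h2
    _ = xdelta n i (a, b) := by rw [Matrix.one_apply]; rfl

lemma Rfun_P (π : Equiv.Perm (Fin (i + m * n))) :
    Rfun (n := n) i m (P n (i + m * n) π)
      = (((n.factorial : ℂ)⁻¹) ^ m) • PhiSigma n i m π (xdelta n i) := by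
  funext ae
  obtain ⟨a, e⟩ := ae
  rw [Rfun]
  set S := splitEquiv (n := n) (1 : Equiv.Perm (Fin (i + m * n))) with hS
  set V0 := (S (a ∘ ⇑π)).1 with hV0
  set E0 := (S (a ∘ ⇑π)).2 with hE0
  have hcond : ∀ v : Fin m → Fin n → Fin n,
      (S.symm (v, e) = a ∘ ⇑π) ↔ (v = V0 ∧ e = E0) := by
    intro v
    rw [Equiv.symm_apply_eq, hV0, hE0, Prod.ext_iff]
  have hterm : ∀ v : Fin m → Fin n → Fin n,
      (∏ t, oVec n (v t)) * P n (i + m * n) π a (S.symm (v, e))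
      = (if v = V0 then (1:ℂ) else 0) *
        ((∏ t, oVec n (v t)) * (if e = E0 then (1:ℂ) else 0)) := by
    intro v
    rw [P_apply]
    by_cases h : S.symm (v, e) = a ∘ ⇑π
    · obtain ⟨h1, h2⟩ := (hcond v).mp h
      rw [if_pos h, if_pos h1, if_pos h2]
      ring
    · rw [if_neg h]
      rcases Decidable.not_and_iff_or_not.mp (fun hh => h ((hcond v).mpr hh)) with h1 | h2
      · rw [if_neg h1]; ring
      · rw [if_neg h2]; ring
  rw [Finset.sum_congr rfl fun v _ => hterm v]
  rw [Finset.sum_eq_single V0]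
  · have hV0t : ∀ t : Fin m, V0 t = fun q => a (inlIdx i m n π t q) := by
      intro t
      funext q
      rw [hV0]
      exact splitEquiv_fst (1 : Equiv.Perm (Fin (i + m * n))) (a ∘ ⇑π) t q
    have hE0t : E0 = fun c => a (inrIdx i m n π c) := by
      funext c
      rw [hE0]
      exact splitEquiv_snd (1 : Equiv.Perm (Fin (i + m * n))) (a ∘ ⇑π) c
    show ((n.factorial : ℂ)⁻¹) ^ m * ((if V0 = V0 then (1:ℂ) else 0) *
        ((∏ t, oVec n (V0 t)) * (if e = E0 then (1:ℂ) else 0)))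
      = ((n.factorial : ℂ)⁻¹) ^ m * PhiSigma n i m π (xdelta n i) (a, e)
    rw [if_pos rfl, one_mul, PhiSigma_apply]
    congr 1
    rw [Finset.prod_congr rfl fun t _ => congrArg (oVec n) (hV0t t)]
    congr 1
    show (if e = E0 then (1:ℂ) else 0) = xdelta n i (fun c => a (inrIdx i m n π c), e)
    rw [xdelta, ← hE0t]
    by_cases h : e = E0
    · rw [if_pos h, if_pos h.symm]
    · rw [if_neg h, if_neg (fun hh => h hh.symm)]
  · intro v _ hv
    rw [if_neg hv, zero_mul]
  · intro h
    exact absurd (Finset.mem_univ _) h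

lemma tact_add {k l : ℕ} (g : (Matrix (Fin n) (Fin n) ℂ)ˣ) (x y : TSp n k l) :
    tact k l g (x + y) = tact k l g x + tact k l g y := by
  funext p
  show tact k l g (x + y) p = tact k l g x p + tact k l g y p
  simp only [tact, Pi.add_apply, mul_add, Finset.sum_add_distrib]

lemma tact_smul {k l : ℕ} (g : (Matrix (Fin n) (Fin n) ℂ)ˣ) (z : ℂ) (x : TSp n k l) :
    tact k l g (z • x) = z • tact k l g x := by
  funext p
  show tact k l g (z • x) p = z * tact k l g x p
  simp only [tact, Pi.smul_apply, smul_eq_mul, Finset.mul_sum]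
  exact Finset.sum_congr rfl fun c _ => by ring

lemma tact_zero {k l : ℕ} (g : (Matrix (Fin n) (Fin n) ℂ)ˣ) :
    tact k l g (0 : TSp n k l) = 0 := by
  funext p
  show (∑ c : Ix n k × Ix n l, _ * (0:ℂ)) = (0:ℂ)
  simp

end Recovery

end AuxFFT
end TensorCov
end

open TensorCov in
/-- for `m > 0`, the `det^m`-eigenspace of `V^{⊗(i+mn)} ⊗ (V*)^{⊗i}`
is the sum over all permutations `σ` of the `i+mn` tensor factors of `V` of the
images under `Φ_σ` of the space of `GL(n,ℂ)`-invariants of `V^{⊗i} ⊗ (V*)^{⊗i}`. -/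
theorem det_eigenspace_eq_sum_images
    (n : ℕ) (hn : 1 ≤ n) (i m : ℕ) (hm : 0 < m) :
    {w : TSp n (i + m * n) i |
        ∀ g : (Matrix (Fin n) (Fin n) ℂ)ˣ,
          tact (i + m * n) i g w = ((g : Matrix (Fin n) (Fin n) ℂ).det) ^ m • w}
      = (Submodule.span ℂ
          (⋃ σ : Equiv.Perm (Fin (i + m * n)),
            PhiSigma n i m σ ''
              {x : TSp n i i | ∀ g : (Matrix (Fin n) (Fin n) ℂ)ˣ, tact i i g x = x}) :
        Set (TSp n (i + m * n) i)) := by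
  classical
  apply Set.Subset.antisymm
  · intro w hw
    simp only [Set.mem_setOf_eq] at hw
    have hcomm : ∀ g : (Matrix (Fin n) (Fin n) ℂ)ˣ,
        AuxFFT.G n (i + m * n) (↑g) * AuxFFT.mat (AuxFFT.Wt i m w)
          = AuxFFT.mat (AuxFFT.Wt i m w) * AuxFFT.G n (i + m * n) (↑g) := by
      intro g
      have h1 := AuxFFT.tact_mat (n := n) g (AuxFFT.Wt i m w)
      rw [AuxFFT.tact_Wt w hw g] at h1
      have h2 : AuxFFT.mat (AuxFFT.Wt i m w) * AuxFFT.G n (i + m * n) (↑g)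
          = AuxFFT.G n (i + m * n) (↑g) * AuxFFT.mat (AuxFFT.Wt i m w) := by
        conv_lhs => rw [h1]
        rw [mul_assoc, AuxFFT.G_unit_inv_mul, mul_one]
      exact h2.symm
    have hspan := AuxFFT.mem_span_P (AuxFFT.mat (AuxFFT.Wt i m w)) hcomm
    have hR : ∀ Y ∈ Submodule.span ℂ (Set.range (AuxFFT.P n (i + m * n))),
        AuxFFT.Rfun i m Y ∈ Submodule.span ℂ
          (⋃ σ : Equiv.Perm (Fin (i + m * n)),
            PhiSigma n i m σ ''
              {x : TSp n i i | ∀ g : (Matrix (Fin n) (Fin n) ℂ)ˣ, tact i i g x = x}) := by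
      intro Y hY
      refine Submodule.span_induction (p := fun Y _ => AuxFFT.Rfun i m Y ∈
        Submodule.span ℂ
          (⋃ σ : Equiv.Perm (Fin (i + m * n)),
            PhiSigma n i m σ ''
              {x : TSp n i i | ∀ g : (Matrix (Fin n) (Fin n) ℂ)ˣ, tact i i g x = x}))
        ?_ ?_ ?_ ?_ hY
      · rintro Y ⟨π, rfl⟩
        rw [AuxFFT.Rfun_P]
        refine Submodule.smul_mem _ _ (Submodule.subset_span ?_)
        refine Set.mem_iUnion.mpr ⟨π, Set.mem_image_of_mem _ ?_⟩
        exact fun g => AuxFFT.xdelta_invariant g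
      · show AuxFFT.Rfun i m 0 ∈ _
        rw [AuxFFT.Rfun_zero]
        exact Submodule.zero_mem _
      · intro Y Z _ _ hY hZ
        show AuxFFT.Rfun i m (Y + Z) ∈ _
        rw [AuxFFT.Rfun_add]
        exact Submodule.add_mem _ hY hZ
      · intro z Y _ hY
        show AuxFFT.Rfun i m (z • Y) ∈ _
        rw [AuxFFT.Rfun_smul]
        exact Submodule.smul_mem _ _ hY
    have hfin := hR _ hspan
    rw [AuxFFT.Rfun_Wt w] at hfin
    exact hfin
  · intro w hw
    simp only [SetLike.mem_coe] at hw
    simp only [Set.mem_setOf_eq]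
    refine Submodule.span_induction (p := fun w _ =>
      ∀ g : (Matrix (Fin n) (Fin n) ℂ)ˣ,
        tact (i + m * n) i g w = ((g : Matrix (Fin n) (Fin n) ℂ).det ^ m) • w)
      ?_ ?_ ?_ ?_ hw
    · rintro x hx
      simp only [Set.mem_iUnion] at hx
      obtain ⟨σ, y, hy, rfl⟩ := hx
      exact fun g => AuxFFT.tact_PhiSigma σ y hy g
    · intro g
      rw [AuxFFT.tact_zero, smul_zero]
    · intro x y _ _ hx hy g
      rw [AuxFFT.tact_add, hx g, hy g, smul_add]
    · intro z x _ hx g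
      rw [AuxFFT.tact_smul, hx g, smul_comm]
end

section
/- Let λ ∈ ℂ^I, fix i ∈ I, and let (s,s') ∈ S(d,v) × S(d,v') satisfy conditions (1)–(5) in the definition of Z_i^λ(d,v). Then: (a) s ∈ Λ_λ(d,v) if and only if s' ∈ Λ_{λ'}(d,v'); (b) if μ_j(s) = λ_j·Id_{V_j} for all j ≠ i, then s ∈ Λ_λ(d,v); (c) if μ_j(s') = λ'_j·Id_{V'_j} for all j ≠ i, then s' ∈ Λ_{λ'}(d,v'). -/
open scoped BigOperators

noncomputable section

structure QuiverShape (I Hh : Type) : Type where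
  src : Hh → I
  tgt : Hh → I
  noloop : ∀ h, src h ≠ tgt h
  rev : Hh → Hh
  rev_ne : ∀ h, rev h ≠ h
  rev_rev : ∀ h, rev (rev h) = h
  src_rev : ∀ h, src (rev h) = tgt h
  tgt_rev : ∀ h, tgt (rev h) = src h
  eps : Hh → ℂ
  eps_pm : ∀ h, eps h = 1 ∨ eps h = -1
  eps_rev : ∀ h, eps (rev h) = - eps h

namespace QuiverShape

variable {I Hh : Type}

/-- The representation space `S(d,v)`: a triple `(B, γ, δ)`. -/
abbrev Rep (Q : QuiverShape I Hh) (d v : I → ℕ) : Type :=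
  ((h : Hh) → Matrix (Fin (v (Q.tgt h))) (Fin (v (Q.src h))) ℂ)
  × ((i : I) → Matrix (Fin (v i)) (Fin (d i)) ℂ)
  × ((i : I) → Matrix (Fin (d i)) (Fin (v i)) ℂ)

/-- The group `G_v = ∏ᵢ GL(Vᵢ)`. -/
abbrev GV (v : I → ℕ) : Type := (i : I) → (Matrix (Fin (v i)) (Fin (v i)) ℂ)ˣ

/-- The action of `G_v` on `S(d,v)`. -/
def act (Q : QuiverShape I Hh) {d v : I → ℕ} (g : GV v) (s : Q.Rep d v) : Q.Rep d v :=
  ⟨fun h => ((g (Q.tgt h) : Matrix (Fin (v (Q.tgt h))) (Fin (v (Q.tgt h))) ℂ) * s.1 h) *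
      (((g (Q.src h))⁻¹ : (Matrix (Fin (v (Q.src h))) (Fin (v (Q.src h))) ℂ)ˣ) :
        Matrix (Fin (v (Q.src h))) (Fin (v (Q.src h))) ℂ),
   fun i => (g i : Matrix (Fin (v i)) (Fin (v i)) ℂ) * s.2.1 i,
   fun i => s.2.2 i * (((g i)⁻¹ : (Matrix (Fin (v i)) (Fin (v i)) ℂ)ˣ) : Matrix (Fin (v i)) (Fin (v i)) ℂ)⟩

/-- `B_{h̄}`, pulled back to a matrix `V_{h₁} → V_{h₀}` via the identities
`(h̄)₀ = h₁`, `(h̄)₁ = h₀`. -/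
def Bbar (Q : QuiverShape I Hh) {d v : I → ℕ} (s : Q.Rep d v) (h : Hh) :
    Matrix (Fin (v (Q.src h))) (Fin (v (Q.tgt h))) ℂ :=
  Matrix.reindex (finCongr (congrArg v (Q.tgt_rev h))) (finCongr (congrArg v (Q.src_rev h)))
    (s.1 (Q.rev h))

/-- The `i`-th component of the moment map:
`μᵢ(s) = ∑_{h : h₁ = i} ε(h) B_h B_{h̄} + γᵢ δᵢ`. -/
def mu (Q : QuiverShape I Hh) [Fintype Hh] [DecidableEq I] {d v : I → ℕ}
    (s : Q.Rep d v) (i : I) : Matrix (Fin (v i)) (Fin (v i)) ℂ :=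
  (∑ h : {h : Hh // Q.tgt h = i},
      Q.eps h.1 • (Matrix.reindex (finCongr (congrArg v h.2)) (finCongr (congrArg v h.2))
        (s.1 h.1 * Q.Bbar s h.1)))
  + s.2.1 i * s.2.2 i

/-- `Λ_λ(d,v) = μ⁻¹(λ)`. -/
def lamSet (Q : QuiverShape I Hh) [Fintype Hh] [DecidableEq I] (lam : I → ℂ) (d v : I → ℕ) :
    Set (Q.Rep d v) :=
  {s | ∀ i, Q.mu s i = lam i • (1 : Matrix (Fin (v i)) (Fin (v i)) ℂ)}

/-- Index type for the coordinates (matrix entries) of `S(d,v)`. -/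
abbrev Coord (Q : QuiverShape I Hh) (d v : I → ℕ) : Type :=
  ((h : Hh) × (Fin (v (Q.tgt h)) × Fin (v (Q.src h))))
  ⊕ (((i : I) × (Fin (v i) × Fin (d i)))
  ⊕ ((i : I) × (Fin (d i) × Fin (v i))))

/-- The coordinates of a point of `S(d,v)`. -/
def coords (Q : QuiverShape I Hh) {d v : I → ℕ} (s : Q.Rep d v) : Q.Coord d v → ℂ
  | Sum.inl ⟨h, rc⟩ => s.1 h rc.1 rc.2
  | Sum.inr (Sum.inl ⟨i, rc⟩) => s.2.1 i rc.1 rc.2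
  | Sum.inr (Sum.inr ⟨i, rc⟩) => s.2.2 i rc.1 rc.2

/-- A function `S(d,v) → ℂ` is polynomial if it is given by a polynomial in the
matrix entries. -/
def IsPolyFun (Q : QuiverShape I Hh) {d v : I → ℕ} (f : Q.Rep d v → ℂ) : Prop :=
  ∃ P : MvPolynomial (Q.Coord d v) ℂ, ∀ s, f s = MvPolynomial.eval (Q.coords s) P

/-- The character `χ_m(g) = ∏ᵢ det(gᵢ)^{mᵢ}`. -/
def chi [Fintype I] {v : I → ℕ} (m : I → ℤ) (g : GV v) : ℂ :=
  ∏ i, ((g i : Matrix (Fin (v i)) (Fin (v i)) ℂ).det) ^ (m i)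

/-- `χ_m`-semistability. -/
def Semistable (Q : QuiverShape I Hh) [Fintype I] {d v : I → ℕ} (m : I → ℤ)
    (s : Q.Rep d v) : Prop :=
  ∃ n : ℕ, 0 < n ∧ ∃ f : Q.Rep d v → ℂ, Q.IsPolyFun f ∧
      (∀ (g : GV v) (t : Q.Rep d v), f (Q.act g t) = (chi m g) ^ n * f t) ∧ f s ≠ 0

/-- `a_{ij}` = number of arrows from `i` to `j`. -/
def aCount (Q : QuiverShape I Hh) (i j : I) : ℕ :=
  Nat.card {h : Hh // Q.src h = i ∧ Q.tgt h = j}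

/-- The generalized Cartan matrix `c_{ij} = 2δ_{ij} - a_{ij}`. -/
def cartan (Q : QuiverShape I Hh) [DecidableEq I] (i j : I) : ℤ :=
  2 * (if i = j then 1 else 0) - (Q.aCount i j : ℤ)

/-- `T_i = D_i ⊕ ⊕_{h : h₁ = i} V_{h₀}`. -/
abbrev TSpace (Q : QuiverShape I Hh) (d v : I → ℕ) (i : I) : Type :=
  (Fin (d i) → ℂ) × ((h : {h : Hh // Q.tgt h = i}) → (Fin (v (Q.src h.1)) → ℂ))

/-- Transport between coordinate spaces of equal dimensions. -/
def vcast {m n : ℕ} (hmn : m = n) : (Fin m → ℂ) ≃ₗ[ℂ] (Fin n → ℂ) :=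
  LinearEquiv.funCongrLeft ℂ ℂ (finCongr hmn.symm)

/-- `a_i(s) = (δ_i, (B_{h̄})_{h : h₁ = i}) : V_i → T_i`. -/
def aMap (Q : QuiverShape I Hh) [DecidableEq I] {d v : I → ℕ}
    (s : Q.Rep d v) (i : I) : (Fin (v i) → ℂ) →ₗ[ℂ] Q.TSpace d v i :=
  LinearMap.prod (Matrix.mulVecLin (s.2.2 i))
    (LinearMap.pi fun h =>
      Matrix.mulVecLin (Q.Bbar s h.1) ∘ₗ (vcast (congrArg v h.2)).symm.toLinearMap)

/-- `b_i(s) = (γ_i, (ε(h) B_h)_{h : h₁ = i}) : T_i → V_i`. -/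
def bMap (Q : QuiverShape I Hh) [Fintype Hh] [DecidableEq I] {d v : I → ℕ}
    (s : Q.Rep d v) (i : I) : Q.TSpace d v i →ₗ[ℂ] (Fin (v i) → ℂ) :=
  (Matrix.mulVecLin (s.2.1 i)).comp (LinearMap.fst ℂ _ _) +
    ∑ h : {h : Hh // Q.tgt h = i},
      Q.eps h.1 •
        ((vcast (congrArg v h.2)).toLinearMap ∘ₗ Matrix.mulVecLin (s.1 h.1) ∘ₗ
          (LinearMap.proj h) ∘ₗ (LinearMap.snd ℂ _ _))

/-- The canonical identification `T_i(d,v') = T_i(d,v)` when `v'` agrees with `v`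
away from `i` (and the graph has no loops). -/
def Tcast (Q : QuiverShape I Hh) {d v v' : I → ℕ} (i : I)
    (hv' : ∀ j, j ≠ i → v' j = v j) : Q.TSpace d v' i ≃ₗ[ℂ] Q.TSpace d v i :=
  (LinearEquiv.refl ℂ (Fin (d i) → ℂ)).prodCongr
    (LinearEquiv.piCongrRight fun (h : {h : Hh // Q.tgt h = i}) =>
      vcast (hv' (Q.src h.1) (fun he => Q.noloop h.1 (he.trans h.2.symm))))

/-- Exactness of `0 → M₁ → M₂ → M₃ → 0`. -/
def ShortExact {M₁ M₂ M₃ : Type} [AddCommGroup M₁] [Module ℂ M₁] [AddCommGroup M₂]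
    [Module ℂ M₂] [AddCommGroup M₃] [Module ℂ M₃]
    (f : M₁ →ₗ[ℂ] M₂) (g : M₂ →ₗ[ℂ] M₃) : Prop :=
  Function.Injective f ∧ Function.Surjective g ∧ LinearMap.range f = LinearMap.ker g

/-- Conditions (1)–(5) defining `Z_i^λ(d,v)`. -/
def ZConds (Q : QuiverShape I Hh) [Fintype Hh] [DecidableEq I] {d v v' : I → ℕ} (i : I)
    (hv' : ∀ j, j ≠ i → v' j = v j) (lam : I → ℂ)
    (s : Q.Rep d v) (s' : Q.Rep d v') : Prop :=
  (∀ h (hs : Q.src h ≠ i) (ht : Q.tgt h ≠ i),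
      s.1 h = Matrix.reindex (finCongr (hv' _ ht)) (finCongr (hv' _ hs)) (s'.1 h)) ∧
  (∀ j (hj : j ≠ i),
      s.2.1 j = Matrix.reindex (finCongr (hv' j hj)) (Equiv.refl _) (s'.2.1 j)) ∧
  (∀ j (hj : j ≠ i),
      s.2.2 j = Matrix.reindex (Equiv.refl _) (finCongr (hv' j hj)) (s'.2.2 j)) ∧
  ShortExact ((Q.Tcast i hv').toLinearMap ∘ₗ Q.aMap s' i) (Q.bMap s i) ∧
  ((Q.Tcast i hv').toLinearMap ∘ₗ (Q.aMap s' i ∘ₗ Q.bMap s' i) ∘ₗ (Q.Tcast i hv').symm.toLinearMap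
      = Q.aMap s i ∘ₗ Q.bMap s i - lam i • LinearMap.id)

/-- The variety `Z_i^λ(d,v)`: conditions (1)–(5) together with condition (6). -/
def ZRel (Q : QuiverShape I Hh) [Fintype Hh] [DecidableEq I] {d v v' : I → ℕ} (i : I)
    (hv' : ∀ j, j ≠ i → v' j = v j) (lam lam' : I → ℂ)
    (s : Q.Rep d v) (s' : Q.Rep d v') : Prop :=
  Q.ZConds i hv' lam s s' ∧ s ∈ Q.lamSet lam d v ∧ s' ∈ Q.lamSet lam' d v'

end QuiverShape

end


open scoped BigOperators

noncomputable section AuxProof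

open Matrix LinearMap

set_option linter.unusedSectionVars false

namespace QuiverShape

variable {I Hh : Type} [Fintype I] [DecidableEq I] [Fintype Hh] [DecidableEq Hh]
variable (Q : QuiverShape I Hh) {d v v' : I → ℕ}

lemma matrix_eq_of_mulVecLin {m n : ℕ} {A B : Matrix (Fin m) (Fin n) ℂ}
    (h : A.mulVecLin = B.mulVecLin) : A = B := by
  ext a b
  have := congrFun (congrArg (fun f => f (Pi.single b 1)) h) a
  simpa [Matrix.mulVec_single_one] using this

lemma mulVecLin_reindex' {m n m' n' : ℕ} (p : m = m') (q : n = n')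
    (M : Matrix (Fin m) (Fin n) ℂ) :
    (Matrix.reindex (finCongr p) (finCongr q) M).mulVecLin
      = (vcast p).toLinearMap ∘ₗ M.mulVecLin ∘ₗ (vcast q).symm.toLinearMap := by
  rw [Matrix.mulVecLin_reindex]
  rfl

lemma sum_compL {ι : Type*} {A B C : Type*} [AddCommMonoid A] [AddCommMonoid B]
    [AddCommMonoid C] [Module ℂ A] [Module ℂ B] [Module ℂ C]
    (t : Finset ι) (f : ι → (B →ₗ[ℂ] C)) (g : A →ₗ[ℂ] B) :
    (∑ h ∈ t, f h) ∘ₗ g = ∑ h ∈ t, f h ∘ₗ g := by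
  ext x; simp

lemma mu_mulVecLin (s : Q.Rep d v) (i : I) :
    (Q.mu s i).mulVecLin = (Q.bMap s i) ∘ₗ (Q.aMap s i) := by
  have h1 : ((s.2.1 i).mulVecLin ∘ₗ fst ℂ _ _) ∘ₗ (Q.aMap s i)
      = (s.2.1 i * s.2.2 i).mulVecLin := by
    rw [LinearMap.comp_assoc, aMap, LinearMap.fst_prod, Matrix.mulVecLin_mul]
  have h2 : ∀ k : {h : Hh // Q.tgt h = i},
      (Q.eps k.1 • ((vcast (congrArg v k.2)).toLinearMap ∘ₗ (s.1 k.1).mulVecLin ∘ₗ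
          (LinearMap.proj k) ∘ₗ (LinearMap.snd ℂ _ _))) ∘ₗ (Q.aMap s i)
      = Matrix.toLin' (Q.eps k.1 • (Matrix.reindex (finCongr (congrArg v k.2))
          (finCongr (congrArg v k.2)) (s.1 k.1 * Q.Bbar s k.1))) := by
    intro k
    rw [_root_.map_smul, Matrix.toLin'_apply', mulVecLin_reindex', Matrix.mulVecLin_mul,
      LinearMap.smul_comp]
    congr 1
  rw [mu, bMap]
  rw [Matrix.mulVecLin_add, ← Matrix.toLin'_apply', map_sum]
  rw [LinearMap.add_comp, sum_compL, h1]
  rw [Finset.sum_congr rfl (fun k _ => h2 k), add_comm]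

lemma smul_one_mulVecLin {n : ℕ} (c : ℂ) :
    ((c • (1 : Matrix (Fin n) (Fin n) ℂ))).mulVecLin = c • LinearMap.id := by
  rw [← Matrix.toLin'_apply', _root_.map_smul, Matrix.toLin'_apply', Matrix.mulVecLin_one]

lemma bMap_comp_Tcast_aMap_eq_zero {i : I} {hv' : ∀ j, j ≠ i → v' j = v j}
    {s : Q.Rep d v} {s' : Q.Rep d v'}
    (hex : ShortExact ((Q.Tcast i hv').toLinearMap ∘ₗ Q.aMap s' i) (Q.bMap s i)) :
    Q.bMap s i ∘ₗ ((Q.Tcast i hv').toLinearMap ∘ₗ Q.aMap s' i) = 0 := by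
  apply LinearMap.ext; intro x
  have hx : ((Q.Tcast i hv').toLinearMap ∘ₗ Q.aMap s' i) x ∈
      LinearMap.range ((Q.Tcast i hv').toLinearMap ∘ₗ Q.aMap s' i) := ⟨x, rfl⟩
  rw [hex.2.2] at hx
  simpa using hx

lemma mu_i_eq {i : I} {hv' : ∀ j, j ≠ i → v' j = v j} {lam : I → ℂ}
    {s : Q.Rep d v} {s' : Q.Rep d v'}
    (hex : ShortExact ((Q.Tcast i hv').toLinearMap ∘ₗ Q.aMap s' i) (Q.bMap s i))
    (h5 : (Q.Tcast i hv').toLinearMap ∘ₗ (Q.aMap s' i ∘ₗ Q.bMap s' i) ∘ₗ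
        (Q.Tcast i hv').symm.toLinearMap
      = Q.aMap s i ∘ₗ Q.bMap s i - lam i • LinearMap.id) :
    Q.mu s i = lam i • (1 : Matrix (Fin (v i)) (Fin (v i)) ℂ) := by
  have hcomp := Q.bMap_comp_Tcast_aMap_eq_zero hex
  apply matrix_eq_of_mulVecLin
  rw [mu_mulVecLin, smul_one_mulVecLin]
  apply LinearMap.ext; intro z
  obtain ⟨y, hy⟩ := hex.2.1 z
  have h5y := congrFun (congrArg DFunLike.coe h5) y
  have := congrArg (Q.bMap s i) h5y
  simp only [LinearMap.comp_apply, LinearMap.sub_apply, LinearMap.smul_apply,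
    LinearMap.id_apply, map_sub, _root_.map_smul, LinearEquiv.coe_coe,
    LinearEquiv.coe_toLinearMap] at this
  have hz : Q.bMap s i ((Q.Tcast i hv') (Q.aMap s' i
      (Q.bMap s' i ((Q.Tcast i hv').symm y)))) = 0 := by
    have := congrFun (congrArg DFunLike.coe hcomp) (Q.bMap s' i ((Q.Tcast i hv').symm y))
    simpa using this
  rw [hz] at this
  have key : Q.bMap s i (Q.aMap s i (Q.bMap s i y)) = lam i • Q.bMap s i y :=
    sub_eq_zero.mp this.symm
  simpa [hy] using key

lemma mu'_i_eq {i : I} {hv' : ∀ j, j ≠ i → v' j = v j} {lam : I → ℂ}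
    {s : Q.Rep d v} {s' : Q.Rep d v'}
    (hex : ShortExact ((Q.Tcast i hv').toLinearMap ∘ₗ Q.aMap s' i) (Q.bMap s i))
    (h5 : (Q.Tcast i hv').toLinearMap ∘ₗ (Q.aMap s' i ∘ₗ Q.bMap s' i) ∘ₗ
        (Q.Tcast i hv').symm.toLinearMap
      = Q.aMap s i ∘ₗ Q.bMap s i - lam i • LinearMap.id) :
    Q.mu s' i = (- lam i) • (1 : Matrix (Fin (v' i)) (Fin (v' i)) ℂ) := by
  have hcomp := Q.bMap_comp_Tcast_aMap_eq_zero hex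
  apply matrix_eq_of_mulVecLin
  rw [mu_mulVecLin, smul_one_mulVecLin]
  apply LinearMap.ext; intro x
  apply hex.1
  have h5y := congrFun (congrArg DFunLike.coe h5) ((Q.Tcast i hv') (Q.aMap s' i x))
  simp only [LinearMap.comp_apply, LinearMap.sub_apply, LinearMap.smul_apply,
    LinearMap.id_apply, LinearEquiv.coe_toLinearMap, LinearEquiv.symm_apply_apply] at h5y
  have hz : Q.bMap s i ((Q.Tcast i hv') (Q.aMap s' i x)) = 0 := by
    have := congrFun (congrArg DFunLike.coe hcomp) x
    simpa using this
  rw [hz] at h5y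
  simp only [map_zero, zero_sub] at h5y
  simp only [LinearMap.comp_apply, LinearMap.smul_apply, LinearMap.id_apply,
    LinearEquiv.coe_toLinearMap]
  rw [h5y]
  simp

lemma aCount_self (i : I) : Q.aCount i i = 0 := by
  have : IsEmpty {h : Hh // Q.src h = i ∧ Q.tgt h = i} :=
    ⟨fun ⟨h, hs, ht⟩ => Q.noloop h (hs.trans ht.symm)⟩
  simp [aCount, Nat.card_of_isEmpty]

lemma bMap_single (s : Q.Rep d v) {i : I} (k : {h : Hh // Q.tgt h = i})
    (x : Fin (v (Q.src k.1)) → ℂ) :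
    Q.bMap s i (0, Pi.single k x)
      = Q.eps k.1 • (vcast (congrArg v k.2)) ((s.1 k.1).mulVec x) := by
  simp only [bMap, LinearMap.add_apply, LinearMap.comp_apply, LinearMap.fst_apply,
    LinearMap.sum_apply, LinearMap.smul_apply, LinearMap.snd_apply, LinearMap.proj_apply,
    Matrix.mulVecLin_apply, LinearEquiv.coe_coe]
  rw [Finset.sum_eq_single k]
  · simp
  · intro k' _ hk'
    rw [Pi.single_eq_of_ne hk']
    simp
  · simp

lemma aMap_snd (s : Q.Rep d v) {i : I} (k : {h : Hh // Q.tgt h = i})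
    (y : Fin (v i) → ℂ) :
    (Q.aMap s i y).2 k = (Q.Bbar s k.1).mulVec ((vcast (congrArg v k.2)).symm y) := by
  simp [aMap]

lemma Tcast_single {i : I} (hv' : ∀ j, j ≠ i → v' j = v j) (k : {h : Hh // Q.tgt h = i})
    (x : Fin (v' (Q.src k.1)) → ℂ) :
    (Q.Tcast i hv') ((0, Pi.single k x) : Q.TSpace d v' i)
      = ((0, Pi.single k
          ((vcast (hv' (Q.src k.1) (fun he => Q.noloop k.1 (he.trans k.2.symm)))) x)) :
            Q.TSpace d v i) := by
  simp only [Tcast, LinearEquiv.prodCongr_apply, LinearEquiv.refl_apply, map_zero]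
  refine Prod.ext rfl ?_
  funext k'
  by_cases hk : k' = k
  · subst hk
    simp
  · simp [LinearEquiv.piCongrRight_apply, Pi.single_eq_of_ne hk]

lemma Tcast_symm_single {i : I} (hv' : ∀ j, j ≠ i → v' j = v j) (k : {h : Hh // Q.tgt h = i})
    (x : Fin (v (Q.src k.1)) → ℂ) :
    (Q.Tcast i hv').symm ((0, Pi.single k x) : Q.TSpace d v i)
      = ((0, Pi.single k
          ((vcast (hv' (Q.src k.1) (fun he => Q.noloop k.1 (he.trans k.2.symm)))).symm x)) :
            Q.TSpace d v' i) := by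
  rw [LinearEquiv.symm_apply_eq, Tcast_single]
  simp

lemma Tcast_snd {i : I} (hv' : ∀ j, j ≠ i → v' j = v j) (k : {h : Hh // Q.tgt h = i})
    (y : Q.TSpace d v' i) :
    ((Q.Tcast i hv') y).2 k
      = (vcast (hv' (Q.src k.1) (fun he => Q.noloop k.1 (he.trans k.2.symm)))) (y.2 k) := by
  simp [Tcast]

lemma block5 {i : I} {hv' : ∀ j, j ≠ i → v' j = v j} {lam : I → ℂ}
    {s : Q.Rep d v} {s' : Q.Rep d v'}
    (h5 : (Q.Tcast i hv').toLinearMap ∘ₗ (Q.aMap s' i ∘ₗ Q.bMap s' i) ∘ₗ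
        (Q.Tcast i hv').symm.toLinearMap
      = Q.aMap s i ∘ₗ Q.bMap s i - lam i • LinearMap.id)
    (k : {h : Hh // Q.tgt h = i}) :
    Q.eps k.1 • Matrix.reindex
        (finCongr (hv' (Q.src k.1) (fun he => Q.noloop k.1 (he.trans k.2.symm))))
        (finCongr (hv' (Q.src k.1) (fun he => Q.noloop k.1 (he.trans k.2.symm))))
        (Q.Bbar s' k.1 * s'.1 k.1)
      = Q.eps k.1 • (Q.Bbar s k.1 * s.1 k.1)
        - lam i • (1 : Matrix (Fin (v (Q.src k.1))) (Fin (v (Q.src k.1))) ℂ) := by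
  set ck := hv' (Q.src k.1) (fun he => Q.noloop k.1 (he.trans k.2.symm)) with hck
  apply matrix_eq_of_mulVecLin
  apply LinearMap.ext; intro x
  simp only [Matrix.mulVecLin_apply, Matrix.sub_mulVec, Matrix.smul_mulVec,
    Matrix.one_mulVec, Matrix.reindex_apply, Matrix.submatrix_mulVec_equiv]
  have h5u := congrFun (congrArg DFunLike.coe h5) (0, Pi.single k x)
  have h2 := congrFun (congrArg Prod.snd h5u) k
  simp only [LinearMap.comp_apply, LinearEquiv.coe_coe, LinearEquiv.coe_toLinearMap,
    LinearMap.sub_apply, LinearMap.smul_apply, LinearMap.id_apply] at h2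
  rw [Tcast_symm_single, bMap_single] at h2
  simp only [_root_.map_smul, Prod.smul_snd, Tcast_snd, aMap_snd, Pi.smul_apply,
    Prod.snd_sub, Pi.sub_apply, Matrix.mulVec_smul, LinearEquiv.symm_apply_apply,
    Matrix.mulVec_mulVec, bMap_single] at h2
  simp only [Pi.single_eq_same] at h2
  simp [vcast, LinearEquiv.funCongrLeft_symm, LinearEquiv.funCongrLeft_apply,
    LinearMap.funLeft_apply, Equiv.symm_symm, Function.comp_def] at h2 ⊢
  exact h2

@[simp] lemma fin_cast_inj {m n : ℕ} (p : m = n) {a b : Fin m} :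
    Fin.cast p a = Fin.cast p b ↔ a = b := by
  subst p; simp

lemma rep1_congr (s : Q.Rep d v) {h h' : Hh} (e : h = h') :
    s.1 h = Matrix.reindex (finCongr (congrArg (fun x => v (Q.tgt x)) e.symm))
      (finCongr (congrArg (fun x => v (Q.src x)) e.symm)) (s.1 h') := by
  subst e; simp

lemma Bbar_rev (s : Q.Rep d v) (h : Hh) :
    Q.Bbar s (Q.rev h)
      = Matrix.reindex (finCongr (congrArg v (Q.src_rev h).symm))
          (finCongr (congrArg v (Q.tgt_rev h).symm)) (s.1 h) := by
  rw [Bbar]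
  simp only [Q.rep1_congr s (Q.rev_rev h)]
  ext a b
  simp [Matrix.submatrix_apply, finCongr_apply]

lemma rev_eq_Bbar (s : Q.Rep d v) (h : Hh) :
    s.1 (Q.rev h) = Matrix.reindex (finCongr (congrArg v (Q.tgt_rev h).symm))
      (finCongr (congrArg v (Q.src_rev h).symm)) (Q.Bbar s h) := by
  rw [Bbar]
  ext a b
  simp [Matrix.submatrix_apply, finCongr_apply, Fin.cast_cast]

lemma caseA {i : I} {hv' : ∀ j, j ≠ i → v' j = v j} {s : Q.Rep d v} {s' : Q.Rep d v'}
    (cond1 : ∀ h (hs : Q.src h ≠ i) (ht : Q.tgt h ≠ i),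
      s.1 h = Matrix.reindex (finCongr (hv' _ ht)) (finCongr (hv' _ hs)) (s'.1 h))
    (h : Hh) (hs : Q.src h ≠ i) (ht : Q.tgt h ≠ i) :
    s.1 h * Q.Bbar s h
      = Matrix.reindex (finCongr (hv' _ ht)) (finCongr (hv' _ ht)) (s'.1 h * Q.Bbar s' h) := by
  have h2 := cond1 (Q.rev h) (by rw [Q.src_rev]; exact ht) (by rw [Q.tgt_rev]; exact hs)
  rw [cond1 h hs ht, Bbar, Bbar, h2]
  ext a b
  simp only [Matrix.mul_apply, Matrix.reindex_apply, Matrix.submatrix_apply, finCongr_apply,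
    Fin.cast_cast, finCongr_symm, fin_cast_inj]
  apply Fintype.sum_equiv (finCongr (hv' (Q.src h) hs).symm)
  intro m
  congr 1

lemma caseB {i : I} {hv' : ∀ j, j ≠ i → v' j = v j} {lam : I → ℂ}
    {s : Q.Rep d v} {s' : Q.Rep d v'}
    (h5 : (Q.Tcast i hv').toLinearMap ∘ₗ (Q.aMap s' i ∘ₗ Q.bMap s' i) ∘ₗ
        (Q.Tcast i hv').symm.toLinearMap
      = Q.aMap s i ∘ₗ Q.bMap s i - lam i • LinearMap.id)
    (h : Hh) (hs : Q.src h = i) (ht : Q.tgt h ≠ i) :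
    Q.eps h • Matrix.reindex (finCongr (hv' _ ht)) (finCongr (hv' _ ht))
        (s'.1 h * Q.Bbar s' h)
      = Q.eps h • (s.1 h * Q.Bbar s h)
        + lam i • (1 : Matrix (Fin (v (Q.tgt h))) (Fin (v (Q.tgt h))) ℂ) := by
  have hk : Q.tgt (Q.rev h) = i := by rw [Q.tgt_rev, hs]
  have hb := Q.block5 h5 ⟨Q.rev h, hk⟩
  simp only at hb
  rw [Q.Bbar_rev s', Q.Bbar_rev s, Q.rev_eq_Bbar s', Q.rev_eq_Bbar s, Q.eps_rev] at hb
  simp only [Matrix.reindex_apply, finCongr_symm, Matrix.submatrix_mul_equiv,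
    Matrix.submatrix_submatrix] at hb
  ext a b
  have hb2 := congrFun (congrFun hb (Fin.cast (congrArg v (Q.src_rev h).symm) a))
    (Fin.cast (congrArg v (Q.src_rev h).symm) b)
  simp only [Matrix.smul_apply, Matrix.sub_apply, Matrix.add_apply, Matrix.submatrix_apply,
    Function.comp_apply, finCongr_apply, Fin.cast_cast, Matrix.one_apply, fin_cast_inj,
    smul_eq_mul, Matrix.reindex_apply, finCongr_symm, neg_smul, Fin.cast_eq_self,
    Matrix.neg_apply] at hb2 ⊢
  linear_combination -hb2

lemma card_filter_aCount (i j : I) :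
    (Finset.univ.filter (fun k : {h : Hh // Q.tgt h = j} => Q.src k.1 = i)).card
      = Q.aCount i j := by
  rw [aCount, Nat.card_eq_fintype_card, ← Fintype.card_subtype]
  exact Fintype.card_congr ⟨fun k => ⟨k.1.1, k.2, k.1.2⟩, fun h => ⟨⟨h.1, h.2.2⟩, h.2.1⟩,
    fun k => rfl, fun h => rfl⟩

lemma mu_ne_eq {i : I} {hv' : ∀ j, j ≠ i → v' j = v j} {lam : I → ℂ}
    {s : Q.Rep d v} {s' : Q.Rep d v'}
    (cond1 : ∀ h (hs : Q.src h ≠ i) (ht : Q.tgt h ≠ i),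
      s.1 h = Matrix.reindex (finCongr (hv' _ ht)) (finCongr (hv' _ hs)) (s'.1 h))
    (cond2 : ∀ j (hj : j ≠ i),
      s.2.1 j = Matrix.reindex (finCongr (hv' j hj)) (Equiv.refl _) (s'.2.1 j))
    (cond3 : ∀ j (hj : j ≠ i),
      s.2.2 j = Matrix.reindex (Equiv.refl _) (finCongr (hv' j hj)) (s'.2.2 j))
    (h5 : (Q.Tcast i hv').toLinearMap ∘ₗ (Q.aMap s' i ∘ₗ Q.bMap s' i) ∘ₗ
        (Q.Tcast i hv').symm.toLinearMap
      = Q.aMap s i ∘ₗ Q.bMap s i - lam i • LinearMap.id)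
    (j : I) (hj : j ≠ i) :
    Q.mu s j = Matrix.reindex (finCongr (hv' j hj)) (finCongr (hv' j hj)) (Q.mu s' j)
      - ((Q.aCount i j : ℂ) * lam i) • (1 : Matrix (Fin (v j)) (Fin (v j)) ℂ) := by
  ext a b
  simp only [mu, Matrix.add_apply, Matrix.sum_apply, Matrix.sub_apply, Matrix.smul_apply,
    Matrix.reindex_apply, Matrix.submatrix_apply, smul_eq_mul, Matrix.one_apply,
    finCongr_symm, finCongr_apply, Fin.cast_cast]
  have hb' : ∀ k : {h : Hh // Q.tgt h = j},
      Q.eps k.1 * (s.1 k.1 * Q.Bbar s k.1)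
          (Fin.cast (congrArg v k.2).symm a) (Fin.cast (congrArg v k.2).symm b)
        = Q.eps k.1 * (s'.1 k.1 * Q.Bbar s' k.1)
            (Fin.cast (show v j = v' (Q.tgt k.1) by rw [k.2]; exact (hv' j hj).symm) a)
            (Fin.cast (show v j = v' (Q.tgt k.1) by rw [k.2]; exact (hv' j hj).symm) b)
          - (if Q.src k.1 = i then lam i else 0) * (if a = b then (1 : ℂ) else 0) := by
    intro k
    have htgt : Q.tgt k.1 ≠ i := by rw [k.2]; exact hj
    by_cases hsrc : Q.src k.1 = i
    · have hB := Q.caseB h5 k.1 hsrc htgt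
      have hB2 := congrFun (congrFun hB (Fin.cast (congrArg v k.2).symm a))
        (Fin.cast (congrArg v k.2).symm b)
      simp only [Matrix.smul_apply, Matrix.add_apply, Matrix.reindex_apply,
        Matrix.submatrix_apply, finCongr_symm, finCongr_apply, Fin.cast_cast,
        Matrix.one_apply, fin_cast_inj, smul_eq_mul] at hB2
      rw [if_pos hsrc]
      exact eq_sub_of_add_eq hB2.symm
    · have hA := Q.caseA cond1 k.1 hsrc htgt
      have hA2 := congrFun (congrFun hA (Fin.cast (congrArg v k.2).symm a))
        (Fin.cast (congrArg v k.2).symm b)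
      simp only [Matrix.reindex_apply, Matrix.submatrix_apply, finCongr_symm,
        finCongr_apply, Fin.cast_cast] at hA2
      rw [if_neg hsrc, zero_mul, sub_zero]
      exact congrArg (fun t => Q.eps k.1 * t) hA2
  have hgd : (s.2.1 j * s.2.2 j) a b
      = (s'.2.1 j * s'.2.2 j) (Fin.cast (hv' j hj).symm a) (Fin.cast (hv' j hj).symm b) := by
    rw [cond2 j hj, cond3 j hj]
    simp [Matrix.mul_apply, finCongr_apply]
  rw [Finset.sum_congr rfl (fun k _ => hb' k), hgd, Finset.sum_sub_distrib,
    ← Finset.sum_mul, ← Finset.sum_filter, Finset.sum_const, card_filter_aCount,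
    nsmul_eq_mul]
  ring

lemma reindex_smul_one {m n : ℕ} (p : m = n) (c : ℂ) :
    Matrix.reindex (finCongr p) (finCongr p) (c • (1 : Matrix (Fin m) (Fin m) ℂ))
      = c • (1 : Matrix (Fin n) (Fin n) ℂ) := by
  ext x y
  simp [Matrix.one_apply, Matrix.submatrix_apply, finCongr_symm, finCongr_apply,
    fin_cast_inj]

end QuiverShape
end AuxProof
theorem mem_lamSet_iff_of_ZConds
    {I Hh : Type} [Fintype I] [DecidableEq I] [Fintype Hh] [DecidableEq Hh]
    (Q : QuiverShape I Hh) (d v v' : I → ℕ) (lam lam' : I → ℂ) (i : I)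
    (hv' : ∀ j, j ≠ i → v' j = v j)
    (hvi : (v' i : ℤ) = (d i : ℤ) - (v i : ℤ) +
      ∑ j ∈ Finset.univ.filter (fun j => j ≠ i), (Q.aCount i j : ℤ) * (v j : ℤ))
    (hlam' : ∀ j, lam' j = lam j - (Q.cartan i j : ℂ) * lam i)
    (s : Q.Rep d v) (s' : Q.Rep d v')
    (hZ : Q.ZConds i hv' lam s s') :
    (s ∈ Q.lamSet lam d v ↔ s' ∈ Q.lamSet lam' d v') ∧
    ((∀ j, j ≠ i → Q.mu s j = lam j • (1 : Matrix (Fin (v j)) (Fin (v j)) ℂ)) →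
      s ∈ Q.lamSet lam d v) ∧
    ((∀ j, j ≠ i → Q.mu s' j = lam' j • (1 : Matrix (Fin (v' j)) (Fin (v' j)) ℂ)) →
      s' ∈ Q.lamSet lam' d v') := by
  obtain ⟨c1, c2, c3, hex, h5⟩ := hZ
  have K1 : Q.mu s i = lam i • (1 : Matrix (Fin (v i)) (Fin (v i)) ℂ) := Q.mu_i_eq hex h5
  have hlami : lam' i = - lam i := by
    rw [hlam' i, QuiverShape.cartan, Q.aCount_self]
    push_cast
    simp only [if_true, if_pos rfl]
    ring
  have K2 : Q.mu s' i = lam' i • (1 : Matrix (Fin (v' i)) (Fin (v' i)) ℂ) := by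
    rw [hlami]
    simpa using Q.mu'_i_eq hex h5
  have equiv_j : ∀ j (hj : j ≠ i),
      (Q.mu s j = lam j • (1 : Matrix (Fin (v j)) (Fin (v j)) ℂ) ↔
       Q.mu s' j = lam' j • (1 : Matrix (Fin (v' j)) (Fin (v' j)) ℂ)) := by
    intro j hj
    have hmu := Q.mu_ne_eq c1 c2 c3 h5 j hj
    have hlj : lam' j = lam j + (Q.aCount i j : ℂ) * lam i := by
      rw [hlam' j, QuiverShape.cartan, if_neg (fun hh => hj hh.symm)]
      push_cast
      ring
    constructor
    · intro hs
      apply (Matrix.reindex (finCongr (hv' j hj)) (finCongr (hv' j hj))).injective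
      rw [QuiverShape.reindex_smul_one]
      have : Matrix.reindex (finCongr (hv' j hj)) (finCongr (hv' j hj)) (Q.mu s' j)
          = Q.mu s j + ((Q.aCount i j : ℂ) * lam i) • 1 := by
        rw [hmu]; abel
      rw [this, hs, hlj, add_smul]
    · intro hs'
      rw [hmu, hs', QuiverShape.reindex_smul_one, hlj, add_smul]
      abel
  refine ⟨⟨fun hm j => ?_, fun hm j => ?_⟩, fun hyp j => ?_, fun hyp j => ?_⟩
  · by_cases hji : j = i
    · subst hji; exact K2
    · exact (equiv_j j hji).mp (hm j)
  · by_cases hji : j = i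
    · subst hji; exact K1
    · exact (equiv_j j hji).mpr (hm j)
  · by_cases hji : j = i
    · subst hji; exact K1
    · exact hyp j hji
  · by_cases hji : j = i
    · subst hji; exact K2
    · exact hyp j hji
end

section
/- Let V, W, X, Y, Z be finite-dimensional complex vector spaces and let α : V → W, β : V → X, γ : V → Y, δ : W → Y, ε : X → Z, φ : Y → Z be linear maps. Then the sequence 0 → V → W⊕X⊕Y → Y⊕Z → 0, with first map v ↦ (α(v), β(v), γ(v)) and second map (w,x,y) ↦ (δ(w) − y, ε(x) + φ(y)), is exact if and only if the sequence 0 → V → W⊕X → Z → 0, with first map v ↦ (α(v), β(v)) and second map (w,x) ↦ φ(δ(w)) + ε(x), is exact and γ = δ∘α. -/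
/-- Exactness of a short sequence `0 → M₁ → M₂ → M₃ → 0` of `ℂ`-vector spaces. -/
def LinearMap.IsShortExactSeq {M₁ M₂ M₃ : Type*} [AddCommGroup M₁] [Module ℂ M₁]
    [AddCommGroup M₂] [Module ℂ M₂] [AddCommGroup M₃] [Module ℂ M₃]
    (f : M₁ →ₗ[ℂ] M₂) (g : M₂ →ₗ[ℂ] M₃) : Prop :=
  Function.Injective f ∧ Function.Surjective g ∧ LinearMap.range f = LinearMap.ker g

/-- first exactness lemma. -/
theorem shortExact_iff_shortExact_and_eq
    {V W X Y Z : Type} [AddCommGroup V] [Module ℂ V] [FiniteDimensional ℂ V]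
    [AddCommGroup W] [Module ℂ W] [FiniteDimensional ℂ W]
    [AddCommGroup X] [Module ℂ X] [FiniteDimensional ℂ X]
    [AddCommGroup Y] [Module ℂ Y] [FiniteDimensional ℂ Y]
    [AddCommGroup Z] [Module ℂ Z] [FiniteDimensional ℂ Z]
    (α : V →ₗ[ℂ] W) (β : V →ₗ[ℂ] X) (γ : V →ₗ[ℂ] Y)
    (δ : W →ₗ[ℂ] Y) (ε : X →ₗ[ℂ] Z) (φ : Y →ₗ[ℂ] Z) :
    LinearMap.IsShortExactSeq
        (LinearMap.prod α (LinearMap.prod β γ))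
        (LinearMap.prod
          (δ ∘ₗ LinearMap.fst ℂ W (X × Y) -
            LinearMap.snd ℂ X Y ∘ₗ LinearMap.snd ℂ W (X × Y))
          (ε ∘ₗ LinearMap.fst ℂ X Y ∘ₗ LinearMap.snd ℂ W (X × Y) +
            φ ∘ₗ LinearMap.snd ℂ X Y ∘ₗ LinearMap.snd ℂ W (X × Y)))
      ↔
    (LinearMap.IsShortExactSeq (LinearMap.prod α β)
        (φ ∘ₗ δ ∘ₗ LinearMap.fst ℂ W X + ε ∘ₗ LinearMap.snd ℂ W X)
      ∧ γ = δ ∘ₗ α) := by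
  simp only [LinearMap.IsShortExactSeq]
  constructor
  · rintro ⟨hinj, hsurj, hker⟩
    have hgf : ∀ v : V, δ (α v) - γ v = 0 ∧ ε (β v) + φ (γ v) = 0 := by
      intro v
      have hv : (α v, (β v, γ v)) ∈ LinearMap.ker
          (LinearMap.prod
            (δ ∘ₗ LinearMap.fst ℂ W (X × Y) -
              LinearMap.snd ℂ X Y ∘ₗ LinearMap.snd ℂ W (X × Y))
            (ε ∘ₗ LinearMap.fst ℂ X Y ∘ₗ LinearMap.snd ℂ W (X × Y) +
              φ ∘ₗ LinearMap.snd ℂ X Y ∘ₗ LinearMap.snd ℂ W (X × Y))) := by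
        rw [← hker]; exact ⟨v, rfl⟩
      simpa [LinearMap.mem_ker, Prod.ext_iff] using hv
    have hγ : γ = δ ∘ₗ α := by
      ext v
      have := (hgf v).1
      simp only [sub_eq_zero] at this
      simp [this.symm]
    refine ⟨⟨?_, ?_, ?_⟩, hγ⟩
    · -- injectivity of small f
      intro v v' h
      apply hinj
      simp only [LinearMap.prod_apply, Function.prod, Prod.mk.injEq] at h ⊢
      refine ⟨h.1, h.2, ?_⟩
      rw [hγ]; simp [h.1]
    · -- surjectivity of small g
      intro z
      obtain ⟨⟨w, x, y⟩, h⟩ := hsurj (0, z)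
      simp only [LinearMap.prod_apply, Function.prod, LinearMap.sub_apply, LinearMap.add_apply,
        LinearMap.coe_comp, Function.comp_apply, LinearMap.fst_apply, LinearMap.snd_apply,
        Prod.mk.injEq] at h
      refine ⟨(w, x), ?_⟩
      have hy : δ w = y := sub_eq_zero.mp h.1
      simp only [LinearMap.add_apply, LinearMap.coe_comp, Function.comp_apply,
        LinearMap.fst_apply, LinearMap.snd_apply]
      rw [hy, add_comm]; exact h.2
    · -- range = ker for small
      ext ⟨w, x⟩
      simp only [LinearMap.mem_range, LinearMap.mem_ker, LinearMap.prod_apply, Function.prod,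
        LinearMap.add_apply, LinearMap.coe_comp, Function.comp_apply, LinearMap.fst_apply,
        LinearMap.snd_apply, Prod.mk.injEq, Prod.exists]
      constructor
      · rintro ⟨v, hv1, hv2⟩
        have := (hgf v).2
        have h1 := (hgf v).1
        rw [sub_eq_zero] at h1
        rw [← hv1, ← hv2, h1, add_comm]
        exact this
      · intro h
        have hmem : ((w, (x, δ w)) : W × X × Y) ∈ LinearMap.ker
            (LinearMap.prod
              (δ ∘ₗ LinearMap.fst ℂ W (X × Y) -
                LinearMap.snd ℂ X Y ∘ₗ LinearMap.snd ℂ W (X × Y))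
              (ε ∘ₗ LinearMap.fst ℂ X Y ∘ₗ LinearMap.snd ℂ W (X × Y) +
                φ ∘ₗ LinearMap.snd ℂ X Y ∘ₗ LinearMap.snd ℂ W (X × Y))) := by
          simp only [LinearMap.mem_ker, LinearMap.prod_apply, Function.prod, LinearMap.sub_apply,
            LinearMap.add_apply, LinearMap.coe_comp, Function.comp_apply, LinearMap.fst_apply,
            LinearMap.snd_apply, Prod.ext_iff, Prod.fst_zero, Prod.snd_zero, sub_self,
            true_and]
          rw [add_comm]; exact h
        rw [← hker] at hmem
        obtain ⟨v, hv⟩ := hmem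
        simp only [LinearMap.prod_apply, Function.prod, Prod.mk.injEq] at hv
        exact ⟨v, hv.1, hv.2.1⟩
  · rintro ⟨⟨hinj, hsurj, hker⟩, hγ⟩
    refine ⟨?_, ?_, ?_⟩
    · intro v v' h
      apply hinj
      simp only [LinearMap.prod_apply, Function.prod, Prod.mk.injEq] at h ⊢
      exact ⟨h.1, h.2.1⟩
    · rintro ⟨y, z⟩
      obtain ⟨⟨w, x⟩, h⟩ := hsurj (z + φ y)
      simp only [LinearMap.add_apply, LinearMap.coe_comp, Function.comp_apply,
        LinearMap.fst_apply, LinearMap.snd_apply] at h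
      refine ⟨(w, x, δ w - y), ?_⟩
      simp only [LinearMap.prod_apply, Function.prod, LinearMap.sub_apply, LinearMap.add_apply,
        LinearMap.coe_comp, Function.comp_apply, LinearMap.fst_apply, LinearMap.snd_apply,
        Prod.mk.injEq, map_sub]
      have hz : z = φ (δ w) + ε x - φ y := (eq_sub_iff_add_eq.mpr h.symm)
      constructor
      · abel
      · rw [hz]; abel
    · ext ⟨w, x, y⟩
      simp only [LinearMap.mem_range, LinearMap.mem_ker, LinearMap.prod_apply, Function.prod,
        LinearMap.sub_apply, LinearMap.add_apply, LinearMap.coe_comp, Function.comp_apply,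
        LinearMap.fst_apply, LinearMap.snd_apply, Prod.mk.injEq, Prod.exists,
        Prod.ext_iff, Prod.fst_zero, Prod.snd_zero]
      constructor
      · rintro ⟨v, hv1, hv2, hv3⟩
        have hzero : φ (δ (α v)) + ε (β v) = 0 := by
          have : ((α v, β v) : W × X) ∈ LinearMap.ker
              (φ ∘ₗ δ ∘ₗ LinearMap.fst ℂ W X + ε ∘ₗ LinearMap.snd ℂ W X) := by
            rw [← hker]; exact ⟨v, rfl⟩
          simpa [LinearMap.mem_ker] using this
        have hy : y = δ w := by rw [← hv3, ← hv1, hγ]; simp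
        constructor
        · rw [hy]; abel
        · rw [← hv2, hy, ← hv1, add_comm]
          exact hzero
      · rintro ⟨h1, h2⟩
        have hy : y = δ w := (sub_eq_zero.mp h1).symm
        have hmem : ((w, x) : W × X) ∈ LinearMap.ker
            (φ ∘ₗ δ ∘ₗ LinearMap.fst ℂ W X + ε ∘ₗ LinearMap.snd ℂ W X) := by
          simp only [LinearMap.mem_ker, LinearMap.add_apply, LinearMap.coe_comp,
            Function.comp_apply, LinearMap.fst_apply, LinearMap.snd_apply]
          rw [hy, add_comm] at h2
          exact h2
        rw [← hker] at hmem
        obtain ⟨v, hv⟩ := hmem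
        simp only [LinearMap.prod_apply, Function.prod, Prod.mk.injEq] at hv
        refine ⟨v, hv.1, hv.2, ?_⟩
        rw [hγ, hy]
        simp [hv.1]
end

section
/- Let U, V, W, X, Y, Z be finite-dimensional complex vector spaces and let α : U → V, β : U → W, γ : U → X, δ : V → X, ε : V → Y, φ : W → Y, ψ : W → Z, ρ : X → Z, σ : Y → Z be linear maps such that the map W⊕X → Z, (w,x) ↦ ψ(w) + ρ(x), is surjective. Then the four-term sequence 0 → U → V⊕W⊕X → X⊕Y⊕Z → Z → 0, with maps u ↦ (α(u), β(u), γ(u)), then (v,w,x) ↦ (δ(v) + x, ε(v) + φ(w), ψ(w) + ρ(x)), then (x,y,z) ↦ ρ(x) + σ(y) − z, is exact if and only if γ = −δ∘α, ψ = σ∘φ, ρ∘δ + σ∘ε = 0, and the sequence 0 → U → V⊕W → Y → 0, with maps u ↦ (α(u), β(u)) and (v,w) ↦ ε(v) + φ(w), is exact. -/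
/-- Exactness of a four-term sequence `0 → M₁ → M₂ → M₃ → M₄ → 0`. -/
def LinearMap.IsFourTermExactSeq {M₁ M₂ M₃ M₄ : Type*}
    [AddCommGroup M₁] [Module ℂ M₁] [AddCommGroup M₂] [Module ℂ M₂]
    [AddCommGroup M₃] [Module ℂ M₃] [AddCommGroup M₄] [Module ℂ M₄]
    (f : M₁ →ₗ[ℂ] M₂) (g : M₂ →ₗ[ℂ] M₃) (k : M₃ →ₗ[ℂ] M₄) : Prop :=
  Function.Injective f ∧ LinearMap.range f = LinearMap.ker g ∧
    LinearMap.range g = LinearMap.ker k ∧ Function.Surjective k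

/-- second exactness lemma. -/
theorem fourTermExact_iff
    {U V W X Y Z : Type}
    [AddCommGroup U] [Module ℂ U] [FiniteDimensional ℂ U]
    [AddCommGroup V] [Module ℂ V] [FiniteDimensional ℂ V]
    [AddCommGroup W] [Module ℂ W] [FiniteDimensional ℂ W]
    [AddCommGroup X] [Module ℂ X] [FiniteDimensional ℂ X]
    [AddCommGroup Y] [Module ℂ Y] [FiniteDimensional ℂ Y]
    [AddCommGroup Z] [Module ℂ Z] [FiniteDimensional ℂ Z]
    (α : U →ₗ[ℂ] V) (β : U →ₗ[ℂ] W) (γ : U →ₗ[ℂ] X)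
    (δ : V →ₗ[ℂ] X) (ε : V →ₗ[ℂ] Y) (φ : W →ₗ[ℂ] Y)
    (ψ : W →ₗ[ℂ] Z) (ρ : X →ₗ[ℂ] Z) (σ : Y →ₗ[ℂ] Z)
    (hsurj : Function.Surjective fun p : W × X => ψ p.1 + ρ p.2) :
    LinearMap.IsFourTermExactSeq
        (LinearMap.prod α (LinearMap.prod β γ))
        (LinearMap.prod
          (δ ∘ₗ LinearMap.fst ℂ V (W × X) +
            LinearMap.snd ℂ W X ∘ₗ LinearMap.snd ℂ V (W × X))
          (LinearMap.prod
            (ε ∘ₗ LinearMap.fst ℂ V (W × X) +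
              φ ∘ₗ LinearMap.fst ℂ W X ∘ₗ LinearMap.snd ℂ V (W × X))
            (ψ ∘ₗ LinearMap.fst ℂ W X ∘ₗ LinearMap.snd ℂ V (W × X) +
              ρ ∘ₗ LinearMap.snd ℂ W X ∘ₗ LinearMap.snd ℂ V (W × X))))
        (ρ ∘ₗ LinearMap.fst ℂ X (Y × Z) +
          σ ∘ₗ LinearMap.fst ℂ Y Z ∘ₗ LinearMap.snd ℂ X (Y × Z) -
          LinearMap.snd ℂ Y Z ∘ₗ LinearMap.snd ℂ X (Y × Z))
      ↔
    (γ = -(δ ∘ₗ α) ∧ ψ = σ ∘ₗ φ ∧ ρ ∘ₗ δ + σ ∘ₗ ε = 0 ∧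
      LinearMap.IsShortExactSeq (LinearMap.prod α β)
        (ε ∘ₗ LinearMap.fst ℂ V W + φ ∘ₗ LinearMap.snd ℂ V W)) := by
  simp only [LinearMap.IsFourTermExactSeq, LinearMap.IsShortExactSeq]
  constructor
  · rintro ⟨hf, hfg, hgk, hk⟩
    rw [SetLike.ext_iff] at hfg hgk
    simp only [LinearMap.mem_range, LinearMap.mem_ker, LinearMap.prod_apply,
      LinearMap.add_apply, LinearMap.sub_apply, LinearMap.coe_comp, Function.comp_apply,
      LinearMap.fst_apply, LinearMap.snd_apply, Function.prod, Prod.mk.injEq,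
      Prod.forall, Prod.exists, Prod.mk_eq_zero] at hfg hgk
    have hψ : ψ = σ ∘ₗ φ := by
      ext w
      have h := (hgk 0 (φ w) (ψ w)).mp ⟨0, w, 0, by simp⟩
      simp only [map_zero, zero_add, sub_eq_zero] at h
      simpa using h.symm
    have hρδ : ρ ∘ₗ δ + σ ∘ₗ ε = 0 := by
      ext v
      have h := (hgk (δ v) (ε v) 0).mp ⟨v, 0, 0, by simp⟩
      simpa using h
    have hγ : γ = -(δ ∘ₗ α) := by
      ext u
      have h := ((hfg (α u) (β u) (γ u)).mp ⟨u, rfl, rfl, rfl⟩).1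
      simp only [LinearMap.neg_apply, LinearMap.comp_apply]
      exact eq_neg_of_add_eq_zero_right h
    refine ⟨hγ, hψ, hρδ, ?_, ?_, ?_⟩
    · -- injectivity of (α, β)
      intro u u' h
      apply hf
      have h1 : α u = α u' := congrArg Prod.fst h
      have h2 : β u = β u' := congrArg Prod.snd h
      have h3 : γ u = γ u' := by rw [hγ]; simp [h1]
      simp only [LinearMap.prod_apply, Function.prod, Prod.mk.injEq]
      exact ⟨h1, h2, h3⟩
    · -- surjectivity of ε∘fst + φ∘snd
      intro y
      obtain ⟨v, w, x, -, hy, -⟩ := (hgk 0 y (σ y)).mpr (by simp)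
      exact ⟨(v, w), by simpa using hy⟩
    · -- range (α,β) = ker
      ext ⟨v, w⟩
      simp only [LinearMap.mem_range, LinearMap.mem_ker, LinearMap.prod_apply,
        LinearMap.add_apply, LinearMap.coe_comp, Function.comp_apply,
        LinearMap.fst_apply, LinearMap.snd_apply, Function.prod, Prod.mk.injEq, Prod.exists]
      constructor
      · rintro ⟨u, hu1, hu2⟩
        have h := ((hfg (α u) (β u) (γ u)).mp ⟨u, rfl, rfl, rfl⟩).2.1
        rw [← hu1, ← hu2]; exact h
      · intro h
        obtain ⟨u, hu1, hu2, -⟩ := (hfg v w (-(δ v))).mpr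
          ⟨by simp, h, by
            have e1 : ψ w = σ (φ w) := by rw [hψ]; rfl
            have e2 : ρ (δ v) + σ (ε v) = 0 := by
              simpa using LinearMap.congr_fun hρδ v
            rw [e1, map_neg]
            have : σ (ε v + φ w) = 0 := by rw [h, map_zero]
            rw [map_add] at this
            linear_combination (norm := abel) this - e2⟩
        exact ⟨u, hu1, hu2⟩
  · rintro ⟨hγ, hψ, hρδ, hinj, hsurjY, hrange⟩
    rw [SetLike.ext_iff] at hrange
    simp only [LinearMap.mem_range, LinearMap.mem_ker, LinearMap.prod_apply,
      LinearMap.add_apply, LinearMap.coe_comp, Function.comp_apply,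
      LinearMap.fst_apply, LinearMap.snd_apply, Function.prod, Prod.mk.injEq,
      Prod.forall, Prod.exists] at hrange
    have eψ : ∀ w, ψ w = σ (φ w) := fun w => by rw [hψ]; rfl
    have eρδ : ∀ v, ρ (δ v) + σ (ε v) = 0 := fun v => by
      simpa using LinearMap.congr_fun hρδ v
    have eγ : ∀ u, γ u = -(δ (α u)) := fun u => by rw [hγ]; simp
    refine ⟨?_, ?_, ?_, ?_⟩
    · -- injectivity of f
      intro u u' h
      simp only [LinearMap.prod_apply, Function.prod, Prod.mk.injEq] at h
      apply hinj
      simp only [LinearMap.prod_apply, Function.prod, Prod.mk.injEq]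
      exact ⟨h.1, h.2.1⟩
    · -- range f = ker g
      ext ⟨v, w, x⟩
      simp only [LinearMap.mem_range, LinearMap.mem_ker, LinearMap.prod_apply,
        LinearMap.add_apply, LinearMap.coe_comp, Function.comp_apply,
        LinearMap.fst_apply, LinearMap.snd_apply, Function.prod, Prod.mk.injEq,
        Prod.exists, Prod.mk_eq_zero]
      constructor
      · rintro ⟨u, hu1, hu2, hu3⟩
        subst hu1 hu2 hu3
        refine ⟨by rw [eγ]; abel, ?_, ?_⟩
        · exact (hrange (α u) (β u)).mp ⟨u, rfl, rfl⟩
        · rw [eγ, eψ, map_neg]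
          have := eρδ (α u)
          have h2 : σ (ε (α u)) + σ (φ (β u)) = 0 := by
            rw [← map_add, (hrange (α u) (β u)).mp ⟨u, rfl, rfl⟩, map_zero]
          linear_combination (norm := abel) h2 - this
      · rintro ⟨h1, h2, h3⟩
        obtain ⟨u, hu1, hu2⟩ := (hrange v w).mpr h2
        refine ⟨u, hu1, hu2, ?_⟩
        rw [eγ, hu1]
        linear_combination (norm := abel) -h1
    · -- range g = ker k
      ext ⟨x, y, z⟩
      simp only [LinearMap.mem_range, LinearMap.mem_ker, LinearMap.prod_apply,
        LinearMap.add_apply, LinearMap.sub_apply, LinearMap.coe_comp, Function.comp_apply,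
        LinearMap.fst_apply, LinearMap.snd_apply, Function.prod, Prod.mk.injEq,
        Prod.exists]
      constructor
      · rintro ⟨v, w, x', h1, h2, h3⟩
        subst h1 h2 h3
        rw [map_add, map_add, eψ]
        linear_combination (norm := abel) eρδ v
      · intro h
        rw [sub_eq_zero] at h
        obtain ⟨⟨v, w⟩, hy⟩ := hsurjY y
        simp only [LinearMap.add_apply, LinearMap.coe_comp, Function.comp_apply,
          LinearMap.fst_apply, LinearMap.snd_apply] at hy
        refine ⟨v, w, x - δ v, by abel, hy, ?_⟩
        rw [eψ, map_sub, ← h, ← hy, map_add]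
        linear_combination (norm := abel) -eρδ v
    · -- k surjective
      intro z
      exact ⟨(0, (0, -z)), by simp⟩
end
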